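/- arXiv:2410.05504 — 4 statements merged into one kernel-verified Lean document; each statement's English description precedes it below -/
import Mathlib

section
/- Revelation principle: For any ambiguous experiment (σ, μ) with message space M and any receiver strategy τ : M → Δ(A) that maximizes τ ↦ U_r(σ, μ, τ), there exists a canonical ambiguous experiment (σ*, μ) (same index set Θ and same weights μ, with message space A), defined by σ*_θ(a|ω) = Σ_m τ(a|m) σ_θ(m|ω), such that (σ*, μ) is obedient (the obedient strategy τ* maximizes τ' ↦ U_r(σ*, μ, τ')) and u_i(σ_θ, τ) = u_i(σ*_θ, τ*) for every i ∈ {s, r} and every θ ∈ Θ. -/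
open Finset

/-- A stochastic kernel from `X` to `Y`: each row `k x` is a probability vector on `Y`.
An experiment is a kernel from states `Ω` to messages; a receiver strategy is a kernel
from messages to actions `A`. -/
def IsKernel {X Y : Type*} [Fintype Y] (k : X → Y → ℝ) : Prop :=
  (∀ x y, 0 ≤ k x y) ∧ ∀ x, ∑ y, k x y = 1

/-- A probability vector on a finite type. -/
def IsProb {Θ : Type*} [Fintype Θ] (μ : Θ → ℝ) : Prop :=
  (∀ θ, 0 ≤ μ θ) ∧ ∑ θ, μ θ = 1

/-- The obedient strategy `τ*`: take the recommended action with probability one. -/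
noncomputable def tauStar {A : Type*} [DecidableEq A] : A → A → ℝ :=
  fun m a => if a = m then (1 : ℝ) else 0

/-- Expected payoff `u_i(σ, τ) = ∑_{ω,m,a} p(ω) σ(m|ω) τ(a|m) u_i(a,ω)`. -/
noncomputable def expPayoff {Ω M A : Type*} [Fintype Ω] [Fintype M] [Fintype A]
    (p : Ω → ℝ) (u : A → Ω → ℝ) (σ : Ω → M → ℝ) (τ : M → A → ℝ) : ℝ :=
  ∑ ω, ∑ m, ∑ a, p ω * σ ω m * τ m a * u a ω

/-- Obedience of a single (unambiguous) canonical experiment: `τ*` is a best reply. -/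
def Obedient {Ω A : Type*} [Fintype Ω] [Fintype A] [DecidableEq A]
    (p : Ω → ℝ) (ur : A → Ω → ℝ) (σ : Ω → A → ℝ) : Prop :=
  ∀ τ : A → A → ℝ, IsKernel τ → expPayoff p ur σ τ ≤ expPayoff p ur σ tauStar

/-- Obedience of an ambiguous experiment `(σ, μ)` for a smooth-ambiguity receiver with
index `φr`:  `τ*` maximizes `τ ↦ U_r(σ, μ, τ) = φr⁻¹(∑_θ μ_θ φr(u_r(σ_θ, τ)))`; since `φr`
is strictly increasing this is equivalent to `τ*` maximizing `τ ↦ ∑_θ μ_θ φr(u_r(σ_θ, τ))`. -/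
def AmbObedient {Ω A Θ : Type*} [Fintype Ω] [Fintype A] [DecidableEq A] [Fintype Θ]
    (φr : ℝ → ℝ) (p : Ω → ℝ) (ur : A → Ω → ℝ) (σ : Θ → Ω → A → ℝ) (μ : Θ → ℝ) : Prop :=
  ∀ τ : A → A → ℝ, IsKernel τ →
    ∑ θ, μ θ * φr (expPayoff p ur (σ θ) τ) ≤ ∑ θ, μ θ * φr (expPayoff p ur (σ θ) tauStar)

/-- A smooth ambiguity index: strictly increasing, concave, differentiable. -/
def SmoothIndex (φ : ℝ → ℝ) : Prop :=
  StrictMono φ ∧ ConcaveOn ℝ Set.univ φ ∧ Differentiable ℝ φ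

/-- Two experiments are (strictly) Pareto ranked: under obedience, sender and receiver
strictly rank them the same way. -/
def ParetoRanked {Ω A : Type*} [Fintype Ω] [Fintype A] [DecidableEq A]
    (p : Ω → ℝ) (us ur : A → Ω → ℝ) (σ σ' : Ω → A → ℝ) : Prop :=
  (expPayoff p us σ' tauStar < expPayoff p us σ tauStar ∧
      expPayoff p ur σ' tauStar < expPayoff p ur σ tauStar) ∨
  (expPayoff p us σ tauStar < expPayoff p us σ' tauStar ∧
      expPayoff p ur σ tauStar < expPayoff p ur σ' tauStar)

/-- Two experiments are weakly Pareto ranked. -/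
def WeaklyParetoRanked {Ω A : Type*} [Fintype Ω] [Fintype A] [DecidableEq A]
    (p : Ω → ℝ) (us ur : A → Ω → ℝ) (σ σ' : Ω → A → ℝ) : Prop :=
  (expPayoff p us σ' tauStar ≤ expPayoff p us σ tauStar ∧
      expPayoff p ur σ' tauStar ≤ expPayoff p ur σ tauStar) ∨
  (expPayoff p us σ tauStar ≤ expPayoff p us σ' tauStar ∧
      expPayoff p ur σ tauStar ≤ expPayoff p ur σ' tauStar)

/-- Pointwise convex combination of two experiments. -/
noncomputable def mixExp {Ω A : Type*} (lam : ℝ) (σ1 σ2 : Ω → A → ℝ) : Ω → A → ℝ :=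
  fun ω a => lam * σ1 ω a + (1 - lam) * σ2 ω a

/-- `(σbar, σlo, lam)` is a Pareto-ranked splitting of the experiment `σ`. -/
def ParetoRankedSplitting {Ω A : Type*} [Fintype Ω] [Fintype A] [DecidableEq A]
    (p : Ω → ℝ) (us ur : A → Ω → ℝ) (σbar σlo : Ω → A → ℝ) (lam : ℝ) (σ : Ω → A → ℝ) : Prop :=
  IsKernel σbar ∧ IsKernel σlo ∧ lam ∈ Set.Ioo (0 : ℝ) 1 ∧
    mixExp lam σbar σlo = σ ∧ ParetoRanked p us ur σbar σlo

/-- The `((σbar, σlo), lam)`-probability premium of a player with utility `u` and index `φ`. -/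
noncomputable def probPremium {Ω A : Type*} [Fintype Ω] [Fintype A] [DecidableEq A]
    (p : Ω → ℝ) (u : A → Ω → ℝ) (φ : ℝ → ℝ) (σbar σlo : Ω → A → ℝ) (lam : ℝ) : ℝ :=
  (φ (expPayoff p u (mixExp lam σbar σlo) tauStar) -
      lam * φ (expPayoff p u σbar tauStar) - (1 - lam) * φ (expPayoff p u σlo tauStar)) /
    (φ (expPayoff p u σbar tauStar) - φ (expPayoff p u σlo tauStar))

/-- The set of `φs`-transformed sender values attainable by obedient ambiguous experiments;
the value of the sender's problem `(P)` equals `u` iff `φs u` is the least upper bound of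
this set (since `φs` is continuous and strictly increasing). -/
def senderValues {Ω A : Type*} [Fintype Ω] [Fintype A] [DecidableEq A]
    (φs φr : ℝ → ℝ) (p : Ω → ℝ) (us ur : A → Ω → ℝ) : Set ℝ :=
  {x | ∃ (n : ℕ) (σ : Fin n → Ω → A → ℝ) (μ : Fin n → ℝ),
    (∀ j, IsKernel (σ j)) ∧ IsProb μ ∧ AmbObedient φr p ur σ μ ∧
    x = ∑ j, μ j * φs (expPayoff p us (σ j) tauStar)}

/-- The set of feasible values of the auxiliary program `(Φ*(u))`: sums
`∑_θ λ_θ Φ_u(σ_θ)` over splittings `(λ_θ, σ_θ)` of obedient experiments, where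
`Φ_u(σ) = (φs(u_s(σ,τ*)) − φs(u)) / φr'(u_r(σ,τ*))`. -/
def phiProgram {Ω A : Type*} [Fintype Ω] [Fintype A] [DecidableEq A]
    (φs φr : ℝ → ℝ) (p : Ω → ℝ) (us ur : A → Ω → ℝ) (u : ℝ) : Set ℝ :=
  {x | ∃ (n : ℕ) (σ : Fin n → Ω → A → ℝ) (lam : Fin n → ℝ),
    (∀ j, IsKernel (σ j)) ∧ IsProb lam ∧
    Obedient p ur (fun ω a => ∑ j, lam j * σ j ω a) ∧
    x = ∑ j, lam j * ((φs (expPayoff p us (σ j) tauStar) - φs u) /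
      deriv φr (expPayoff p ur (σ j) tauStar))}

lemma comp_payoff {Ω M A : Type*} [Fintype Ω] [Fintype M] [Fintype A]
    (p : Ω → ℝ) (u : A → Ω → ℝ) (σ : Ω → M → ℝ) (τ : M → A → ℝ) (τ' : A → A → ℝ) :
    expPayoff p u (fun ω a => ∑ m, τ m a * σ ω m) τ' =
      expPayoff p u σ (fun m a => ∑ b, τ m b * τ' b a) := by
  unfold expPayoff
  refine Finset.sum_congr rfl fun ω _ => ?_
  simp only [Finset.sum_mul, Finset.mul_sum]
  calc ∑ b : A, ∑ a : A, ∑ m : M, p ω * (τ m b * σ ω m) * τ' b a * u a ω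
      = ∑ b : A, ∑ m : M, ∑ a : A, p ω * (τ m b * σ ω m) * τ' b a * u a ω :=
        Finset.sum_congr rfl fun b _ => Finset.sum_comm
    _ = ∑ m : M, ∑ b : A, ∑ a : A, p ω * (τ m b * σ ω m) * τ' b a * u a ω :=
        Finset.sum_comm
    _ = ∑ m : M, ∑ a : A, ∑ b : A, p ω * σ ω m * (τ m b * τ' b a) * u a ω := by
        refine Finset.sum_congr rfl fun m _ => ?_
        refine Finset.sum_comm.trans ?_
        exact Finset.sum_congr rfl fun a _ => Finset.sum_congr rfl fun b _ => by ring

lemma comp_tauStar {M A : Type*} [Fintype A] [DecidableEq A] (τ : M → A → ℝ) :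
    (fun m a => ∑ b, τ m b * tauStar b a) = τ := by
  funext m a
  simp [tauStar, mul_ite]

/-- Revelation principle, Proposition 1:  for any ambiguous experiment
`(σ, μ)` with message space `M` and any receiver strategy `τ` maximizing
`τ ↦ U_r(σ, μ, τ)`, the canonical ambiguous experiment `(σ*, μ)` with
`σ*_θ(a|ω) = ∑_m τ(a|m) σ_θ(m|ω)` is obedient and yields the same payoffs. -/
theorem revelation_principle
    {Ω M A Θ : Type*} [Fintype Ω] [Fintype M] [Fintype A] [DecidableEq A] [Fintype Θ]
    (p : Ω → ℝ) (hp : IsProb p) (us ur : A → Ω → ℝ)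
    (φs φr : ℝ → ℝ) (hφs : SmoothIndex φs) (hφr : SmoothIndex φr)
    (σ : Θ → Ω → M → ℝ) (hσ : ∀ θ, IsKernel (σ θ))
    (μ : Θ → ℝ) (hμ : IsProb μ)
    (τ : M → A → ℝ) (hτ : IsKernel τ)
    (hbest : ∀ τ' : M → A → ℝ, IsKernel τ' →
      ∑ θ, μ θ * φr (expPayoff p ur (σ θ) τ') ≤ ∑ θ, μ θ * φr (expPayoff p ur (σ θ) τ)) :
    (∀ θ, IsKernel (fun ω a => ∑ m, τ m a * σ θ ω m)) ∧
    AmbObedient φr p ur (fun θ ω a => ∑ m, τ m a * σ θ ω m) μ ∧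
    (∀ θ,
      expPayoff p us (σ θ) τ = expPayoff p us (fun ω a => ∑ m, τ m a * σ θ ω m) tauStar ∧
      expPayoff p ur (σ θ) τ = expPayoff p ur (fun ω a => ∑ m, τ m a * σ θ ω m) tauStar) := by
  have hker : ∀ θ, IsKernel (fun ω a => ∑ m, τ m a * σ θ ω m) := by
    intro θ
    constructor
    · intro ω a
      exact Finset.sum_nonneg fun m _ => mul_nonneg (hτ.1 m a) ((hσ θ).1 ω m)
    · intro ω
      rw [Finset.sum_comm]
      have : ∀ m, ∑ a, τ m a * σ θ ω m = σ θ ω m := by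
        intro m; rw [← Finset.sum_mul, hτ.2 m, one_mul]
      simp only [this, (hσ θ).2]
  have hpay : ∀ (u : A → Ω → ℝ) θ,
      expPayoff p u (σ θ) τ = expPayoff p u (fun ω a => ∑ m, τ m a * σ θ ω m) tauStar := by
    intro u θ
    rw [comp_payoff, comp_tauStar]
  refine ⟨hker, ?_, fun θ => ⟨hpay us θ, hpay ur θ⟩⟩
  intro τ' hτ'
  have hcomp : IsKernel (fun m a => ∑ b, τ m b * τ' b a) := by
    constructor
    · intro m a
      exact Finset.sum_nonneg fun b _ => mul_nonneg (hτ.1 m b) (hτ'.1 b a)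
    · intro m
      rw [Finset.sum_comm]
      have : ∀ b, ∑ a, τ m b * τ' b a = τ m b := by
        intro b; rw [← Finset.mul_sum, hτ'.2 b, mul_one]
      simp only [this, hτ.2]
  have h := hbest _ hcomp
  calc ∑ θ, μ θ * φr (expPayoff p ur (fun ω a => ∑ m, τ m a * σ θ ω m) τ')
      = ∑ θ, μ θ * φr (expPayoff p ur (σ θ) (fun m a => ∑ b, τ m b * τ' b a)) := by
        simp only [comp_payoff]
    _ ≤ ∑ θ, μ θ * φr (expPayoff p ur (σ θ) τ) := h
    _ = ∑ θ, μ θ * φr (expPayoff p ur (fun ω a => ∑ m, τ m a * σ θ ω m) tauStar) := by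
        simp only [hpay ur]
end

section
/- Effective-measure characterization of obedience: A canonical ambiguous experiment (σ, μ) is obedient (τ* maximizes τ ↦ U_r(σ, μ, τ)) if, and only if, the single (unambiguous) experiment σ* := Σ_θ em_θ σ_θ is obedient, where em ∈ Δ(Θ) is the receiver's effective measure defined by em_θ = μ_θ φ_r'(u_r(σ_θ, τ*)) / Σ_{θ'} μ_{θ'} φ_r'(u_r(σ_{θ'}, τ*)). -/
open Finset

lemma my_tangent_le {φ : ℝ → ℝ} (hφ : SmoothIndex φ) (x y : ℝ) :
    φ y ≤ φ x + deriv φ x * (y - x) := by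
  obtain ⟨-, hc, hd⟩ := hφ
  rcases lt_trichotomy x y with h | h | h
  · have := hc.slope_le_deriv (Set.mem_univ x) (Set.mem_univ y) h (hd x)
    rw [slope_def_field] at this
    have h' : 0 < y - x := by linarith
    rw [div_le_iff₀ h'] at this
    linarith
  · simp [h]
  · have := hc.deriv_le_slope (Set.mem_univ y) (Set.mem_univ x) h (hd x)
    rw [slope_def_field] at this
    have h' : 0 < x - y := by linarith
    rw [le_div_iff₀ h'] at this
    nlinarith
  
lemma my_expPayoff_sum {Ω M A Θ : Type*} [Fintype Ω] [Fintype M] [Fintype A] [Fintype Θ]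
    (p : Ω → ℝ) (u : A → Ω → ℝ) (σ : Θ → Ω → M → ℝ) (c : Θ → ℝ) (τ : M → A → ℝ) :
    expPayoff p u (fun ω m => ∑ θ, c θ * σ θ ω m) τ = ∑ θ, c θ * expPayoff p u (σ θ) τ := by
  simp only [expPayoff, Finset.mul_sum, Finset.sum_mul]
  conv_rhs => rw [Finset.sum_comm]
  refine Finset.sum_congr rfl fun ω _ => ?_
  conv_rhs => rw [Finset.sum_comm]
  refine Finset.sum_congr rfl fun m _ => ?_
  conv_rhs => rw [Finset.sum_comm]
  refine Finset.sum_congr rfl fun a _ => ?_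
  refine Finset.sum_congr rfl fun θ _ => ?_
  ring

lemma my_expPayoff_affine {Ω M A : Type*} [Fintype Ω] [Fintype M] [Fintype A]
    (p : Ω → ℝ) (u : A → Ω → ℝ) (σ : Ω → M → ℝ) (τ1 τ2 : M → A → ℝ) (t : ℝ) :
    expPayoff p u σ (fun m a => (1 - t) * τ1 m a + t * τ2 m a)
      = (1 - t) * expPayoff p u σ τ1 + t * expPayoff p u σ τ2 := by
  simp only [expPayoff, Finset.mul_sum, ← Finset.sum_add_distrib]
  refine Finset.sum_congr rfl fun ω _ => Finset.sum_congr rfl fun m _ =>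
    Finset.sum_congr rfl fun a _ => ?_
  ring

lemma my_tauStar_kernel {A : Type*} [Fintype A] [DecidableEq A] :
    IsKernel (tauStar (A := A)) := by
  constructor
  · intro m a; unfold tauStar; positivity
  · intro m; simp [tauStar]

lemma my_mix_kernel {A : Type*} [Fintype A] {τ1 τ2 : A → A → ℝ} {t : ℝ}
    (ht0 : 0 ≤ t) (ht1 : t ≤ 1) (h1 : IsKernel τ1) (h2 : IsKernel τ2) :
    IsKernel (fun m a => (1 - t) * τ1 m a + t * τ2 m a) := by
  constructor
  · intro m a
    have := h1.1 m a; have := h2.1 m a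
    have h1t : (0:ℝ) ≤ 1 - t := by linarith
    positivity
  · intro m
    simp only [Finset.sum_add_distrib, ← Finset.mul_sum, h1.2 m, h2.2 m]
    ring

/-- Lemma 1: the ambiguous experiment `(σ, μ)` is obedient iff the
unambiguous experiment `σ* = ∑_θ em_θ σ_θ` is obedient, where `em` is the receiver's
effective measure `em_θ = μ_θ φr'(u_r(σ_θ,τ*)) / ∑_{θ'} μ_{θ'} φr'(u_r(σ_{θ'},τ*))`. -/
theorem effective_measure_obedience
    {Ω A Θ : Type*} [Fintype Ω] [Fintype A] [DecidableEq A] [Fintype Θ]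
    (p : Ω → ℝ) (hp : IsProb p) (ur : A → Ω → ℝ)
    (φr : ℝ → ℝ) (hφr : SmoothIndex φr) (hφr' : ∀ x, 0 < deriv φr x)
    (σ : Θ → Ω → A → ℝ) (hσ : ∀ θ, IsKernel (σ θ))
    (μ : Θ → ℝ) (hμ : IsProb μ) :
    AmbObedient φr p ur σ μ ↔
      Obedient p ur (fun ω a => ∑ θ,
        (μ θ * deriv φr (expPayoff p ur (σ θ) tauStar) /
          ∑ θ', μ θ' * deriv φr (expPayoff p ur (σ θ') tauStar)) * σ θ ω a) := by
  set C : ℝ := ∑ θ', μ θ' * deriv φr (expPayoff p ur (σ θ') tauStar) with hC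
  have hCpos : 0 < C := by
    obtain ⟨θ0, hθ0⟩ : ∃ θ, 0 < μ θ := by
      by_contra h
      push_neg at h
      have : ∑ θ, μ θ ≤ 0 := Finset.sum_nonpos fun θ _ => h θ
      linarith [hμ.2]
    exact Finset.sum_pos' (fun θ _ => mul_nonneg (hμ.1 θ) (hφr' _).le)
      ⟨θ0, Finset.mem_univ θ0, mul_pos hθ0 (hφr' _)⟩
  have hCne : C ≠ 0 := ne_of_gt hCpos
  have hdiff : ∀ τ : A → A → ℝ,
      expPayoff p ur (fun ω x => ∑ θ,
          (μ θ * deriv φr (expPayoff p ur (σ θ) tauStar) / C) * σ θ ω x) tauStar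
        - expPayoff p ur (fun ω x => ∑ θ,
          (μ θ * deriv φr (expPayoff p ur (σ θ) tauStar) / C) * σ θ ω x) τ
        = (∑ θ, μ θ * (deriv φr (expPayoff p ur (σ θ) tauStar) *
            (expPayoff p ur (σ θ) tauStar - expPayoff p ur (σ θ) τ))) / C := by
    intro τ
    rw [my_expPayoff_sum p ur σ _ tauStar, my_expPayoff_sum p ur σ _ τ,
      ← Finset.sum_sub_distrib, Finset.sum_div]
    refine Finset.sum_congr rfl fun θ _ => ?_
    field_simp
  constructor
  · -- AmbObedient → Obedient of mixture
    intro Hamb τ hτ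
    have hder : HasDerivAt
        (fun t : ℝ => ∑ θ, μ θ * φr (expPayoff p ur (σ θ) tauStar +
          t * (expPayoff p ur (σ θ) τ - expPayoff p ur (σ θ) tauStar)))
        (∑ θ, μ θ * (deriv φr (expPayoff p ur (σ θ) tauStar) *
          (expPayoff p ur (σ θ) τ - expPayoff p ur (σ θ) tauStar))) 0 := by
      apply HasDerivAt.fun_sum
      intro θ _
      set x0 := expPayoff p ur (σ θ) tauStar with hx0
      set dd := expPayoff p ur (σ θ) τ - x0 with hdd
      have hinner : HasDerivAt (fun t : ℝ => x0 + t * dd) dd 0 := by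
        simpa using ((hasDerivAt_id (0:ℝ)).mul_const dd).const_add x0
      have houter : HasDerivAt φr (deriv φr x0) (x0 + 0 * dd) := by
        rw [show x0 + 0 * dd = x0 by ring]
        exact (hφr.2.2 x0).hasDerivAt
      have hcomp := HasDerivAt.comp (0:ℝ) houter hinner
      simpa [Function.comp] using hcomp.const_mul (μ θ)
    have hle : ∀ t ∈ Set.Ioc (0:ℝ) 1,
        (∑ θ, μ θ * φr (expPayoff p ur (σ θ) tauStar +
            t * (expPayoff p ur (σ θ) τ - expPayoff p ur (σ θ) tauStar)))
          ≤ ∑ θ, μ θ * φr (expPayoff p ur (σ θ) tauStar) := by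
      intro t ht
      have hker := my_mix_kernel ht.1.le ht.2 my_tauStar_kernel hτ
      have h2 := Hamb _ hker
      have heq : ∀ θ, expPayoff p ur (σ θ) (fun m x => (1 - t) * tauStar m x + t * τ m x)
          = expPayoff p ur (σ θ) tauStar +
            t * (expPayoff p ur (σ θ) τ - expPayoff p ur (σ θ) tauStar) := by
        intro θ
        rw [my_expPayoff_affine]
        ring
      simpa only [heq] using h2
    have hS0 : (∑ θ, μ θ * (deriv φr (expPayoff p ur (σ θ) tauStar) *
        (expPayoff p ur (σ θ) τ - expPayoff p ur (σ θ) tauStar))) ≤ 0 := by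
      have htend := hasDerivAt_iff_tendsto_slope.mp hder
      have htend' := htend.mono_left
        (nhdsWithin_mono (0:ℝ) (fun x (hx : x ∈ Set.Ioi (0:ℝ)) => ne_of_gt hx))
      refine le_of_tendsto htend' ?_
      filter_upwards [Ioc_mem_nhdsGT_of_mem (by norm_num : (0:ℝ) ∈ Set.Ico (0:ℝ) 1)] with t ht
      have h1 := hle t ht
      have h2 : (fun t : ℝ => ∑ θ, μ θ * φr (expPayoff p ur (σ θ) tauStar +
            t * (expPayoff p ur (σ θ) τ - expPayoff p ur (σ θ) tauStar))) t
          ≤ (fun t : ℝ => ∑ θ, μ θ * φr (expPayoff p ur (σ θ) tauStar +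
            t * (expPayoff p ur (σ θ) τ - expPayoff p ur (σ θ) tauStar))) 0 := by
        simpa using h1
      rw [slope_def_field]
      apply div_nonpos_of_nonpos_of_nonneg
      · linarith
      · linarith [ht.1]
    have key := hdiff τ
    have hneg : (∑ θ, μ θ * (deriv φr (expPayoff p ur (σ θ) tauStar) *
          (expPayoff p ur (σ θ) tauStar - expPayoff p ur (σ θ) τ)))
        + (∑ θ, μ θ * (deriv φr (expPayoff p ur (σ θ) tauStar) *
          (expPayoff p ur (σ θ) τ - expPayoff p ur (σ θ) tauStar))) = 0 := by
      rw [← Finset.sum_add_distrib]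
      exact Finset.sum_eq_zero fun θ _ => by ring
    have hfin : 0 ≤ (∑ θ, μ θ * (deriv φr (expPayoff p ur (σ θ) tauStar) *
        (expPayoff p ur (σ θ) tauStar - expPayoff p ur (σ θ) τ))) / C :=
      div_nonneg (by linarith) hCpos.le
    rw [← key] at hfin
    linarith
  · -- Obedient of mixture → AmbObedient
    intro Hob τ hτ
    have h1 := hdiff τ
    have h2 := Hob τ hτ
    have h4 : 0 ≤ ∑ θ, μ θ * (deriv φr (expPayoff p ur (σ θ) tauStar) *
        (expPayoff p ur (σ θ) tauStar - expPayoff p ur (σ θ) τ)) := by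
      have h3 : 0 ≤ (∑ θ, μ θ * (deriv φr (expPayoff p ur (σ θ) tauStar) *
          (expPayoff p ur (σ θ) tauStar - expPayoff p ur (σ θ) τ))) / C := by
        rw [← h1]; linarith
      by_contra h
      push_neg at h
      have := div_neg_of_neg_of_pos h hCpos
      linarith
    calc ∑ θ, μ θ * φr (expPayoff p ur (σ θ) τ)
        ≤ ∑ θ, μ θ * (φr (expPayoff p ur (σ θ) tauStar) +
            deriv φr (expPayoff p ur (σ θ) tauStar) *
              (expPayoff p ur (σ θ) τ - expPayoff p ur (σ θ) tauStar)) :=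
          Finset.sum_le_sum fun θ _ =>
            mul_le_mul_of_nonneg_left (my_tangent_le hφr _ _) (hμ.1 θ)
      _ = (∑ θ, μ θ * φr (expPayoff p ur (σ θ) tauStar))
            - ∑ θ, μ θ * (deriv φr (expPayoff p ur (σ θ) tauStar) *
              (expPayoff p ur (σ θ) tauStar - expPayoff p ur (σ θ) τ)) := by
          rw [← Finset.sum_sub_distrib]
          exact Finset.sum_congr rfl fun θ _ => by ring
      _ ≤ ∑ θ, μ θ * φr (expPayoff p ur (σ θ) tauStar) := by linarith
end

section
/- No Pareto-ranked splitting at an optimum for an ambiguity-neutral sender: Suppose (σ, μ) is a solution to the sender's problem (P) (obedient and attaining the supremum of U_s over obedient ambiguous experiments), φ_r is strictly concave, and φ_s is affine. Then for every θ in the support of μ there does not exist a Pareto-ranked splitting (σ̄, σ̲, λ) of σ_θ such that u_s(σ̄, τ*) ≥ U_s(σ, μ, τ*) ≥ u_s(σ̲, τ*). -/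
open Finset

section Aux
open Finset Set



section Cone

variable {ι : Type*} [Fintype ι]

/-- Carathéodory-type reduction: any nonnegative combination can be rewritten with
linearly independent support. -/
lemma cone_caratheodory {E : Type*} [AddCommGroup E] [Module ℝ E]
    (v : ι → E) (y : ι → ℝ) (hy : ∀ i, 0 ≤ y i) :
    ∃ z : ι → ℝ, (∀ i, 0 ≤ z i) ∧ ∑ i, z i • v i = ∑ i, y i • v i ∧
      LinearIndependent ℝ (fun i : {i // z i ≠ 0} => v (i : ι)) := by
  classical
  generalize hn : (Finset.univ.filter fun i => y i ≠ 0).card = n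
  induction n using Nat.strong_induction_on generalizing y with
  | _ n ih =>
    by_cases h : LinearIndependent ℝ (fun i : {i // y i ≠ 0} => v (i : ι))
    · exact ⟨y, hy, rfl, h⟩
    · obtain ⟨g, hg0, i₁, hi₁⟩ := Fintype.not_linearIndependent_iff.mp h
      -- extend g to ι by zero
      set c0 : ι → ℝ := fun i => if hi : y i ≠ 0 then g ⟨i, hi⟩ else 0 with hc0
      have hc0sum : ∑ i, c0 i • v i = 0 := by
        have h1 : ∑ i ∈ Finset.univ.filter (fun i => y i ≠ 0), c0 i • v i
            = ∑ i : {i // y i ≠ 0}, c0 (i : ι) • v (i : ι) :=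
          Finset.sum_subtype _ (by simp) _
        have h2 : ∑ i ∈ Finset.univ.filter (fun i => y i ≠ 0), c0 i • v i
            = ∑ i, c0 i • v i :=
          Finset.sum_filter_of_ne (by
            intro i _ hne
            by_contra hyi
            simp [hc0, hyi] at hne)
        rw [← h2, h1, ← hg0]
        refine Finset.sum_congr rfl fun i _ => ?_
        rcases i with ⟨i, hi⟩
        simp [hc0, hi]
      have hc0supp : ∀ i, c0 i ≠ 0 → y i ≠ 0 := by
        intro i hne
        by_contra hyi
        simp [hc0, hyi] at hne
      have hc0ne : c0 (i₁ : ι) ≠ 0 := by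
        rcases i₁ with ⟨i, hi⟩; simpa [hc0, hi] using hi₁
      -- get a version with a positive entry
      obtain ⟨c, hcsum, hcsupp, i₂, hi₂⟩ :
          ∃ c : ι → ℝ, (∑ i, c i • v i = 0) ∧ (∀ i, c i ≠ 0 → y i ≠ 0) ∧ ∃ i, 0 < c i := by
        rcases lt_or_gt_of_ne hc0ne with hneg | hpos
        · refine ⟨fun i => - c0 i, ?_, fun i hi => hc0supp i (by simpa using hi),
            (i₁ : ι), by simpa using neg_pos.mpr hneg⟩
          simp only [neg_smul, Finset.sum_neg_distrib, hc0sum, neg_zero]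
        · exact ⟨c0, hc0sum, hc0supp, (i₁ : ι), hpos⟩
      set P := Finset.univ.filter fun i => 0 < c i with hP
      have hPne : P.Nonempty := ⟨i₂, by simp [hP, hi₂]⟩
      obtain ⟨i₀, hi₀P, hmin⟩ := Finset.exists_min_image P (fun i => y i / c i) hPne
      have hci₀ : 0 < c i₀ := by simpa [hP] using hi₀P
      set t := y i₀ / c i₀ with ht
      have ht0 : 0 ≤ t := div_nonneg (hy i₀) hci₀.le
      set z : ι → ℝ := fun i => y i - t * c i with hz
      have hz0 : ∀ i, 0 ≤ z i := by
        intro i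
        rcases lt_trichotomy (c i) 0 with hc | hc | hc
        · have h3 : t * c i ≤ 0 := mul_nonpos_of_nonneg_of_nonpos ht0 hc.le
          simp only [hz]; linarith [hy i]
        · simp [hz, hc, hy i]
        · have hiP : i ∈ P := by simp [hP, hc]
          have h4 := hmin i hiP
          have h2 : t * c i ≤ y i := by
            rw [ht, div_mul_eq_mul_div, div_le_iff₀ hci₀]
            rw [div_le_div_iff₀ hci₀ hc] at h4
            linarith
          simp only [hz]; linarith
      have hzsum : ∑ i, z i • v i = ∑ i, y i • v i := by
        simp only [hz, sub_smul, Finset.sum_sub_distrib, mul_smul]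
        rw [← Finset.smul_sum, hcsum, smul_zero, sub_zero]
      have hzsupp : (Finset.univ.filter fun i => z i ≠ 0) ⊂
          (Finset.univ.filter fun i => y i ≠ 0) := by
        constructor
        · intro i hi
          simp only [Finset.mem_filter, Finset.mem_univ, true_and] at hi ⊢
          intro hyi
          rcases eq_or_ne (c i) 0 with hci | hci
          · simp [hz, hci, hyi] at hi
          · exact (hcsupp i hci) hyi
        · intro hsub
          have hy₀ : y i₀ ≠ 0 := hcsupp i₀ hci₀.ne'
          have hmem : i₀ ∈ Finset.univ.filter fun i => y i ≠ 0 := by simp [hy₀]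
          have hz₀ : z i₀ = 0 := by
            simp only [hz, ht]
            field_simp; ring
          have := hsub hmem
          simp [hz₀] at this
      have hcard : (Finset.univ.filter fun i => z i ≠ 0).card < n := by
        rw [← hn]; exact Finset.card_lt_card hzsupp
      obtain ⟨w, hw0, hwsum, hwli⟩ := ih _ hcard z hz0 rfl
      exact ⟨w, hw0, by rw [hwsum, hzsum], hwli⟩

/-- A finitely generated cone in a finite-dimensional normed space is closed. -/
lemma isClosed_cone {E : Type*} [NormedAddCommGroup E] [NormedSpace ℝ E]
    [FiniteDimensional ℝ E] (v : ι → E) :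
    IsClosed {x : E | ∃ y : ι → ℝ, (∀ i, 0 ≤ y i) ∧ x = ∑ i, y i • v i} := by
  classical
  have hrepr : {x : E | ∃ y : ι → ℝ, (∀ i, 0 ≤ y i) ∧ x = ∑ i, y i • v i} =
      ⋃ s ∈ {s : Finset ι | LinearIndependent ℝ (fun i : s => v (i : ι))},
        (fun y : {i // i ∈ s} → ℝ => ∑ i, y i • v (i : ι)) '' {y | ∀ i, 0 ≤ y i} := by
    ext x
    simp only [Set.mem_setOf_eq, Set.mem_iUnion, Set.mem_image]
    constructor
    · rintro ⟨y, hy0, rfl⟩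
      obtain ⟨z, hz0, hzsum, hzli⟩ := cone_caratheodory v y hy0
      set s := Finset.univ.filter fun i => z i ≠ 0 with hs
      have hli : LinearIndependent ℝ (fun i : s => v (i : ι)) := by
        have h := hzli.comp (Equiv.subtypeEquivRight (p := fun i => i ∈ s)
          (q := fun i => z i ≠ 0) (by simp [hs])) (Equiv.injective _)
        exact h
      refine ⟨s, hli, fun i => z (i : ι), fun i => hz0 _, ?_⟩
      have h2 : ∑ i ∈ s, z i • v i = ∑ i, z i • v i :=
        Finset.sum_subset (Finset.subset_univ s) (fun i _ his => by
          have hzi : z i = 0 := by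
            by_contra hne; exact his (by simp [hs, hne])
          simp [hzi])
      show ∑ i : {i // i ∈ s}, z (i : ι) • v (i : ι) = ∑ i, y i • v i
      exact (Finset.sum_coe_sort s (fun i => z i • v i)).trans (h2.trans hzsum)
    · rintro ⟨s, hsli, y, hy0, rfl⟩
      refine ⟨fun i => if hi : i ∈ s then y ⟨i, hi⟩ else 0, fun i => ?_, ?_⟩
      · by_cases hi : i ∈ s <;> simp [hi, hy0 _]
      · have h2 : ∑ i, (if hi : i ∈ s then y ⟨i, hi⟩ else 0) • v i
            = ∑ i ∈ s, (if hi : i ∈ s then y ⟨i, hi⟩ else 0) • v i :=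
          (Finset.sum_subset (Finset.subset_univ s) fun i _ his => by simp [his]).symm
        have h1 : ∑ i : {i // i ∈ s}, (if hi : (i : ι) ∈ s then y ⟨(i : ι), hi⟩ else 0) • v (i : ι)
            = ∑ i ∈ s, (if hi : i ∈ s then y ⟨i, hi⟩ else 0) • v i :=
          Finset.sum_coe_sort s (fun i => (if hi : i ∈ s then y ⟨i, hi⟩ else 0) • v i)
        show ∑ i : {i // i ∈ s}, y i • v (i : ι)
            = ∑ i, (if hi : i ∈ s then y ⟨i, hi⟩ else 0) • v i
        rw [h2, ← h1]
        refine Finset.sum_congr rfl fun i _ => ?_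
        rcases i with ⟨i, hi⟩
        simp [hi]
  rw [hrepr]
  refine Set.Finite.isClosed_biUnion (Set.toFinite _) (fun s hs => ?_)
  have hs' : LinearIndependent ℝ (fun i : s => v (i : ι)) := hs
  set L : ({i // i ∈ s} → ℝ) →ₗ[ℝ] E :=
    LinearMap.lsum ℝ (fun _ : s => ℝ) ℝ (fun i => LinearMap.id.smulRight (v (i : ι))) with hL
  have hLapp : ∀ y : {i // i ∈ s} → ℝ, L y = ∑ i, y i • v (i : ι) := by
    intro y
    simp [hL, LinearMap.lsum_apply, LinearMap.smulRight_apply]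
  have hker : LinearMap.ker L = ⊥ := by
    rw [LinearMap.ker_eq_bot']
    intro y hy
    have h0 : ∑ i, y i • v (i : ι) = 0 := by rw [← hLapp]; exact hy
    funext i
    exact Fintype.linearIndependent_iff.mp hs' y h0 i
  have hemb := LinearMap.isClosedEmbedding_of_injective hker
  have horth : IsClosed {y : {i // i ∈ s} → ℝ | ∀ i, 0 ≤ y i} := by
    have : {y : {i // i ∈ s} → ℝ | ∀ i, 0 ≤ y i} = ⋂ i, {y | 0 ≤ y i} := by
      ext y; simp [Set.mem_iInter]
    rw [this]
    exact isClosed_iInter fun i => isClosed_le continuous_const (continuous_apply i)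
  have himg : (fun y : {i // i ∈ s} → ℝ => ∑ i, y i • v (i : ι)) '' {y | ∀ i, 0 ≤ y i}
      = L '' {y | ∀ i, 0 ≤ y i} := by
    refine Set.image_congr fun y _ => ?_
    rw [hLapp]
  rw [himg]
  exact hemb.isClosedMap _ horth

end Cone

/-- Strong LP duality over the simplex, in the exact form we need. -/
lemma lp_dual {J K : Type*} [Fintype J] [Fintype K]
    (g : K → J → ℝ) (f : J → ℝ) (c : ℝ)
    (h : ∀ x : J → ℝ, (∀ j, 0 ≤ x j) → ∑ j, x j = 1 → (∀ k, ∑ j, x j * g k j ≤ 0) →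
      ∑ j, x j * f j ≤ c) :
    ∃ y : K → ℝ, (∀ k, 0 ≤ y k) ∧ ∀ j, f j - ∑ k, y k * g k j ≤ c := by
  classical
  set gen : (K ⊕ J) → (J → ℝ) := Sum.elim g (fun j => - Pi.single j 1) with hgen
  set D : Set (J → ℝ) := {w | ∃ y : (K ⊕ J) → ℝ, (∀ i, 0 ≤ y i) ∧ w = ∑ i, y i • gen i}
    with hD
  have hDclosed : IsClosed D := isClosed_cone gen
  have hDconvex : Convex ℝ D := by
    rintro w1 ⟨y1, hy1, rfl⟩ w2 ⟨y2, hy2, rfl⟩ a b ha hb hab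
    refine ⟨fun i => a * y1 i + b * y2 i,
      fun i => add_nonneg (mul_nonneg ha (hy1 i)) (mul_nonneg hb (hy2 i)), ?_⟩
    rw [Finset.smul_sum, Finset.smul_sum, ← Finset.sum_add_distrib]
    refine Finset.sum_congr rfl fun i _ => ?_
    simp [add_smul, mul_smul]
  have hmem : (fun j => f j - c) ∈ D := by
    by_contra hnot
    obtain ⟨ℓ, u, hu1, hu2⟩ := geometric_hahn_banach_closed_point hDconvex hDclosed hnot
    have h0 : (0 : J → ℝ) ∈ D := ⟨0, fun i => le_refl 0, by simp⟩
    have hu0 : 0 < u := by simpa using hu1 0 h0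
    have hgen_le : ∀ i, ℓ (gen i) ≤ 0 := by
      intro i
      by_contra hpos
      push_neg at hpos
      have hmemt : ((u + 1) / ℓ (gen i)) • gen i ∈ D := by
        refine ⟨fun i' => if i' = i then (u + 1) / ℓ (gen i) else 0, fun i' => ?_, ?_⟩
        · dsimp only
          by_cases hi' : i' = i
          · rw [if_pos hi']
            exact div_nonneg (by linarith) hpos.le
          · rw [if_neg hi']
        · dsimp only
          rw [Finset.sum_eq_single i (fun b _ hb => by rw [if_neg hb, zero_smul])
            (fun hb => absurd (Finset.mem_univ i) hb), if_pos rfl]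
      have := hu1 _ hmemt
      rw [map_smul, smul_eq_mul, div_mul_cancel₀ _ (ne_of_gt hpos)] at this
      linarith
    set x : J → ℝ := fun j => ℓ (Pi.single j 1) with hx
    have hx0 : ∀ j, 0 ≤ x j := by
      intro j
      have h5 := hgen_le (Sum.inr j)
      rw [hgen] at h5
      simp only [Sum.elim_inr, map_neg] at h5
      rw [hx]
      linarith
    have hrepr : ∀ w : J → ℝ, ℓ w = ∑ j, w j * x j := by
      intro w
      conv_lhs => rw [pi_eq_sum_univ w]
      rw [map_sum]
      refine Finset.sum_congr rfl fun j _ => ?_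
      rw [map_smul, smul_eq_mul]
      congr 1
      rw [hx]
      dsimp only
      congr 1
      funext j'
      rw [Pi.single_apply]
      by_cases hq : j = j'
      · simp [hq]
      · simp [hq, Ne.symm hq]
    have hgk : ∀ k, ∑ j, x j * g k j ≤ 0 := by
      intro k
      have := hgen_le (Sum.inl k)
      rw [hgen] at this
      simp only [Sum.elim_inl] at this
      rw [hrepr (g k)] at this
      calc ∑ j, x j * g k j = ∑ j, g k j * x j := by
            exact Finset.sum_congr rfl fun j _ => mul_comm _ _
        _ ≤ 0 := this
    have hfp : u < ∑ j, (f j - c) * x j := by rw [← hrepr]; exact hu2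
    have hxsum : 0 < ∑ j, x j := by
      rcases (Finset.sum_nonneg (fun j _ => hx0 j)).lt_or_eq with hlt | heq
      · exact hlt
      · exfalso
        have hall : ∀ j ∈ Finset.univ, x j = 0 :=
          (Finset.sum_eq_zero_iff_of_nonneg (fun j _ => hx0 j)).mp heq.symm
        have : ∑ j, (f j - c) * x j = 0 :=
          Finset.sum_eq_zero fun j hj => by rw [hall j hj, mul_zero]
        rw [this] at hfp
        linarith
    set X := ∑ j, x j with hX
    have happ := h (fun j => x j / X) (fun j => div_nonneg (hx0 j) hxsum.le)
      (by rw [← Finset.sum_div]; field_simp; exact hX.symm)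
      (fun k => by
        rw [show ∑ j, x j / X * g k j = (∑ j, x j * g k j) / X by
          rw [Finset.sum_div]; exact Finset.sum_congr rfl fun j _ => by ring]
        exact div_nonpos_of_nonpos_of_nonneg (hgk k) hxsum.le)
    rw [show ∑ j, x j / X * f j = (∑ j, x j * f j) / X by
          rw [Finset.sum_div]; exact Finset.sum_congr rfl fun j _ => by ring] at happ
    rw [div_le_iff₀ hxsum] at happ
    have hexp : ∑ j, (f j - c) * x j = ∑ j, x j * f j - c * X := by
      rw [hX, Finset.mul_sum, ← Finset.sum_sub_distrib]
      exact Finset.sum_congr rfl fun j _ => by ring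
    rw [hexp] at hfp
    have : c * X = X * c := mul_comm _ _
    nlinarith
  obtain ⟨y, hy0, hyrepr⟩ := hmem
  refine ⟨fun k => y (Sum.inl k), fun k => hy0 _, fun j => ?_⟩
  have hj := congrFun hyrepr j
  have heval : (∑ i, y i • gen i) j = ∑ k, y (Sum.inl k) * g k j - y (Sum.inr j) := by
    rw [Finset.sum_apply]
    rw [Fintype.sum_sum_type]
    have h1 : ∀ k, (y (Sum.inl k) • gen (Sum.inl k)) j = y (Sum.inl k) * g k j := by
      intro k; simp [hgen]
    have h2 : ∑ j', (y (Sum.inr j') • gen (Sum.inr j')) j = - y (Sum.inr j) := by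
      have : ∀ j', (y (Sum.inr j') • gen (Sum.inr j')) j
          = if j = j' then - y (Sum.inr j') else 0 := by
        intro j'
        simp only [hgen, Sum.elim_inr, Pi.smul_apply, Pi.neg_apply, smul_eq_mul]
        rw [Pi.single_apply]
        by_cases hj' : j = j' <;> simp [hj']
      rw [Finset.sum_congr rfl fun j' _ => this j']
      rw [Finset.sum_ite_eq Finset.univ j (fun j' => - y (Sum.inr j'))]
      simp
    rw [Finset.sum_congr rfl fun k _ => h1 k, h2]
    ring
  rw [heval] at hj
  have hz := hy0 (Sum.inr j)
  have : f j - c = ∑ k, y (Sum.inl k) * g k j - y (Sum.inr j) := hj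
  linarith

section PayoffAlgebra

variable {Ω A : Type*} [Fintype Ω] [Fintype A] [DecidableEq A]

/-- The message-action payoff matrix of an experiment. -/
noncomputable def wMat (p : Ω → ℝ) (u : A → Ω → ℝ) (σ : Ω → A → ℝ) (m a : A) : ℝ :=
  ∑ ω, p ω * σ ω m * u a ω

lemma expPayoff_eq_wMat (p : Ω → ℝ) (u : A → Ω → ℝ) (σ : Ω → A → ℝ) (τ : A → A → ℝ) :
    expPayoff p u σ τ = ∑ m, ∑ a, τ m a * wMat p u σ m a := by
  unfold expPayoff wMat
  rw [Finset.sum_comm]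
  refine Finset.sum_congr rfl fun m _ => ?_
  rw [Finset.sum_comm]
  refine Finset.sum_congr rfl fun a _ => ?_
  rw [Finset.mul_sum]
  exact Finset.sum_congr rfl fun ω _ => by ring

lemma expPayoff_tauStar_eq (p : Ω → ℝ) (u : A → Ω → ℝ) (σ : Ω → A → ℝ) :
    expPayoff p u σ tauStar = ∑ m, wMat p u σ m m := by
  rw [expPayoff_eq_wMat]
  refine Finset.sum_congr rfl fun m _ => ?_
  simp only [tauStar, ite_mul, one_mul, zero_mul]
  rw [Finset.sum_ite_eq' Finset.univ m (fun a => wMat p u σ m a)]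
  simp

lemma expPayoff_dev (p : Ω → ℝ) (u : A → Ω → ℝ) (σ : Ω → A → ℝ) {τ : A → A → ℝ}
    (hτ : IsKernel τ) :
    expPayoff p u σ τ - expPayoff p u σ tauStar
      = ∑ m, ∑ a, τ m a * (wMat p u σ m a - wMat p u σ m m) := by
  rw [expPayoff_eq_wMat, expPayoff_tauStar_eq]
  rw [← Finset.sum_sub_distrib]
  refine Finset.sum_congr rfl fun m _ => ?_
  have h1 : ∑ a, τ m a * wMat p u σ m m = wMat p u σ m m := by
    rw [← Finset.sum_mul, hτ.2 m, one_mul]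
  have h2 : ∑ a, τ m a * (wMat p u σ m a - wMat p u σ m m)
      = ∑ a, τ m a * wMat p u σ m a - ∑ a, τ m a * wMat p u σ m m := by
    rw [← Finset.sum_sub_distrib]
    exact Finset.sum_congr rfl fun a _ => by ring
  rw [h2, h1]

lemma wMat_mix (p : Ω → ℝ) (u : A → Ω → ℝ) (σ1 σ2 : Ω → A → ℝ) (lam : ℝ) (m a : A) :
    wMat p u (mixExp lam σ1 σ2) m a = lam * wMat p u σ1 m a + (1 - lam) * wMat p u σ2 m a := by
  unfold wMat mixExp
  rw [Finset.mul_sum, Finset.mul_sum, ← Finset.sum_add_distrib]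
  exact Finset.sum_congr rfl fun ω _ => by ring

lemma expPayoff_mix (p : Ω → ℝ) (u : A → Ω → ℝ) (σ1 σ2 : Ω → A → ℝ) (lam : ℝ)
    (τ : A → A → ℝ) :
    expPayoff p u (mixExp lam σ1 σ2) τ
      = lam * expPayoff p u σ1 τ + (1 - lam) * expPayoff p u σ2 τ := by
  simp only [expPayoff_eq_wMat, wMat_mix]
  rw [Finset.mul_sum, Finset.mul_sum, ← Finset.sum_add_distrib]
  refine Finset.sum_congr rfl fun m _ => ?_
  rw [Finset.mul_sum, Finset.mul_sum, ← Finset.sum_add_distrib]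
  exact Finset.sum_congr rfl fun a _ => by ring

end PayoffAlgebra

section ConcaveHelpers

/-- Tangent line bound for a differentiable concave function. -/
lemma concave_tangent_le {φ : ℝ → ℝ} (hc : ConcaveOn ℝ Set.univ φ)
    (hd : Differentiable ℝ φ) (x u : ℝ) :
    φ u ≤ φ x + deriv φ x * (u - x) := by
  rcases lt_trichotomy x u with hlt | heq | hgt
  · have h := hc.slope_le_deriv (Set.mem_univ x) (Set.mem_univ u) hlt (hd x)
    rw [slope_def_field] at h
    rw [div_le_iff₀ (by linarith)] at h
    linarith
  · simp [heq]
  · have h := hc.deriv_le_slope (Set.mem_univ u) (Set.mem_univ x) hgt (hd x)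
    rw [slope_def_field] at h
    rw [le_div_iff₀ (by linarith)] at h
    nlinarith
  
/-- Derivative of a strictly monotone concave differentiable function is positive. -/
lemma deriv_pos_of_strictMono_concave {φ : ℝ → ℝ} (hm : StrictMono φ)
    (hc : ConcaveOn ℝ Set.univ φ) (hd : Differentiable ℝ φ) (x : ℝ) :
    0 < deriv φ x := by
  have h := hc.slope_le_deriv (Set.mem_univ x) (Set.mem_univ (x + 1)) (lt_add_one x)
    (hd x)
  rw [slope_def_field] at h
  have h2 : φ x < φ (x + 1) := hm (lt_add_one x)
  have h3 : (φ (x + 1) - φ x) / (x + 1 - x) = φ (x + 1) - φ x := by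
    simp
  rw [h3] at h
  linarith

/-- Strictly concave differentiable functions have strictly decreasing derivative. -/
lemma deriv_strictAnti_of_strictConcave {φ : ℝ → ℝ} (hc : StrictConcaveOn ℝ Set.univ φ)
    (hd : Differentiable ℝ φ) {x y : ℝ} (hxy : x < y) :
    deriv φ y < deriv φ x :=
  hc.strictAntiOn_deriv (fun z _ => hd z) (Set.mem_univ x)
    (Set.mem_univ y) hxy

/-- If `f s ≤ f 0` for `s ∈ (0,1]` and `f` is differentiable at `0`, then `f' 0 ≤ 0`. -/
lemma hasDerivAt_nonpos_of_le {f : ℝ → ℝ} {d : ℝ} (hf : HasDerivAt f d 0)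
    (hle : ∀ s : ℝ, 0 < s → s ≤ 1 → f s ≤ f 0) : d ≤ 0 := by
  have ht : Filter.Tendsto (slope f 0) (nhdsWithin 0 (Set.Ioi 0)) (nhds d) :=
    (hasDerivAt_iff_tendsto_slope.mp hf).mono_left
      (nhdsWithin_mono 0 (fun x hx => ne_of_gt hx))
  refine le_of_tendsto ht ?_
  filter_upwards [Ioo_mem_nhdsGT_of_mem (Set.mem_Ico.mpr ⟨le_refl (0:ℝ), one_pos⟩)] with s hs
  rw [slope_def_field]
  apply div_nonpos_of_nonpos_of_nonneg
  · linarith [hle s hs.1 hs.2.le]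
  · linarith [hs.1]

end ConcaveHelpers

section Obedience

variable {Ω A : Type*} [Fintype Ω] [Fintype A] [DecidableEq A]

/-- Linearized obedience implies obedience (tangent-line/concavity argument). -/
lemma ambObedient_of_linearized {J : Type*} [Fintype J] {φr : ℝ → ℝ}
    (hconc : ConcaveOn ℝ Set.univ φr) (hdiff : Differentiable ℝ φr)
    (p : Ω → ℝ) (ur : A → Ω → ℝ) (F : J → Ω → A → ℝ) (x : J → ℝ) (hx0 : ∀ j, 0 ≤ x j)
    (hcon : ∀ m a : A, ∑ j, x j * (deriv φr (expPayoff p ur (F j) tauStar) *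
        (wMat p ur (F j) m a - wMat p ur (F j) m m)) ≤ 0) :
    AmbObedient φr p ur F x := by
  intro τ hτ
  have key : ∀ j, φr (expPayoff p ur (F j) τ) ≤ φr (expPayoff p ur (F j) tauStar)
      + deriv φr (expPayoff p ur (F j) tauStar)
        * (expPayoff p ur (F j) τ - expPayoff p ur (F j) tauStar) :=
    fun j => concave_tangent_le hconc hdiff _ _
  have step1 : ∑ j, x j * φr (expPayoff p ur (F j) τ)
      ≤ ∑ j, x j * (φr (expPayoff p ur (F j) tauStar)
        + deriv φr (expPayoff p ur (F j) tauStar)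
          * (expPayoff p ur (F j) τ - expPayoff p ur (F j) tauStar)) :=
    Finset.sum_le_sum fun j _ => mul_le_mul_of_nonneg_left (key j) (hx0 j)
  have step2 : ∑ j, x j * (φr (expPayoff p ur (F j) tauStar)
        + deriv φr (expPayoff p ur (F j) tauStar)
          * (expPayoff p ur (F j) τ - expPayoff p ur (F j) tauStar))
      = ∑ j, x j * φr (expPayoff p ur (F j) tauStar)
        + ∑ m, ∑ a, τ m a * (∑ j, x j * (deriv φr (expPayoff p ur (F j) tauStar)
            * (wMat p ur (F j) m a - wMat p ur (F j) m m))) := by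
    have hsplit : ∑ j, x j * (φr (expPayoff p ur (F j) tauStar)
          + deriv φr (expPayoff p ur (F j) tauStar)
            * (expPayoff p ur (F j) τ - expPayoff p ur (F j) tauStar))
        = ∑ j, x j * φr (expPayoff p ur (F j) tauStar)
          + ∑ j, x j * (deriv φr (expPayoff p ur (F j) tauStar)
            * (expPayoff p ur (F j) τ - expPayoff p ur (F j) tauStar)) := by
      rw [← Finset.sum_add_distrib]
      exact Finset.sum_congr rfl fun j _ => by ring
    have hinner : ∀ j, x j * (deriv φr (expPayoff p ur (F j) tauStar)
          * (expPayoff p ur (F j) τ - expPayoff p ur (F j) tauStar))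
        = ∑ m, ∑ a, τ m a * (x j * (deriv φr (expPayoff p ur (F j) tauStar)
            * (wMat p ur (F j) m a - wMat p ur (F j) m m))) := by
      intro j
      rw [expPayoff_dev p ur (F j) hτ, Finset.mul_sum, Finset.mul_sum]
      refine Finset.sum_congr rfl fun m _ => ?_
      rw [Finset.mul_sum, Finset.mul_sum]
      exact Finset.sum_congr rfl fun a _ => by ring
    have hswap : ∑ j, ∑ m, ∑ a, τ m a * (x j * (deriv φr (expPayoff p ur (F j) tauStar)
            * (wMat p ur (F j) m a - wMat p ur (F j) m m)))
        = ∑ m, ∑ a, ∑ j, τ m a * (x j * (deriv φr (expPayoff p ur (F j) tauStar)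
            * (wMat p ur (F j) m a - wMat p ur (F j) m m))) := by
      rw [Finset.sum_comm]
      exact Finset.sum_congr rfl fun m _ => Finset.sum_comm
    have hpull : ∀ m a : A, ∑ j, τ m a * (x j * (deriv φr (expPayoff p ur (F j) tauStar)
            * (wMat p ur (F j) m a - wMat p ur (F j) m m)))
        = τ m a * (∑ j, x j * (deriv φr (expPayoff p ur (F j) tauStar)
            * (wMat p ur (F j) m a - wMat p ur (F j) m m))) := by
      intro m a
      rw [Finset.mul_sum]
    rw [hsplit, Finset.sum_congr rfl fun j _ => hinner j, hswap]
    congr 1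
    exact Finset.sum_congr rfl fun m _ => Finset.sum_congr rfl fun a _ => hpull m a
  have step3 : ∑ m, ∑ a, τ m a * (∑ j, x j * (deriv φr (expPayoff p ur (F j) tauStar)
      * (wMat p ur (F j) m a - wMat p ur (F j) m m))) ≤ 0 := by
    refine Finset.sum_nonpos fun m _ => Finset.sum_nonpos fun a _ => ?_
    exact mul_nonpos_of_nonneg_of_nonpos (hτ.1 m a) (hcon m a)
  calc ∑ j, x j * φr (expPayoff p ur (F j) τ)
      ≤ _ := step1
    _ = _ := step2
    _ ≤ ∑ j, x j * φr (expPayoff p ur (F j) tauStar) := by linarith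

/-- The single-message swap deviation kernel. -/
noncomputable def swapK {A : Type*} [DecidableEq A] (m0 a0 : A) (s : ℝ) : A → A → ℝ :=
  fun m a => if m = m0 then (1 - s) * (if a = m0 then 1 else 0) + s * (if a = a0 then 1 else 0)
    else (if a = m then 1 else 0)

lemma isKernel_swapK {A : Type*} [Fintype A] [DecidableEq A] (m0 a0 : A) {s : ℝ}
    (h0 : 0 ≤ s) (h1 : s ≤ 1) : IsKernel (swapK m0 a0 s) := by
  constructor
  · intro m a
    unfold swapK
    by_cases hm : m = m0
    · rw [if_pos hm]
      have t1 : (0:ℝ) ≤ (1 - s) * (if a = m0 then 1 else 0) := by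
        by_cases h : a = m0 <;> simp [h] <;> linarith
      have t2 : (0:ℝ) ≤ s * (if a = a0 then 1 else 0) := by
        by_cases h : a = a0 <;> simp [h] <;> linarith
      linarith
    · rw [if_neg hm]
      by_cases h : a = m <;> simp [h]
  · intro m
    unfold swapK
    by_cases hm : m = m0
    · simp only [if_pos hm, Finset.sum_add_distrib, ← Finset.mul_sum]
      rw [Finset.sum_ite_eq' Finset.univ m0 (fun _ => (1:ℝ)),
        Finset.sum_ite_eq' Finset.univ a0 (fun _ => (1:ℝ))]
      simp
    · simp only [if_neg hm]
      rw [Finset.sum_ite_eq' Finset.univ m (fun _ => (1:ℝ))]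
      simp

lemma expPayoff_swapK {Ω A : Type*} [Fintype Ω] [Fintype A] [DecidableEq A]
    (p : Ω → ℝ) (u : A → Ω → ℝ) (σ : Ω → A → ℝ) (m0 a0 : A) (s : ℝ) :
    expPayoff p u σ (swapK m0 a0 s) = expPayoff p u σ tauStar
      + s * (wMat p u σ m0 a0 - wMat p u σ m0 m0) := by
  rw [expPayoff_eq_wMat, expPayoff_tauStar_eq]
  have hterm : ∀ m : A, ∑ a, swapK m0 a0 s m a * wMat p u σ m a
      = wMat p u σ m m + (if m = m0 then s * (wMat p u σ m0 a0 - wMat p u σ m0 m0) else 0) := by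
    intro m
    by_cases hm : m = m0
    · subst hm
      simp only [swapK, eq_self_iff_true, if_true]
      have : ∀ a, ((1 - s) * (if a = m then 1 else 0) + s * (if a = a0 then 1 else 0))
            * wMat p u σ m a
          = (1 - s) * (if a = m then wMat p u σ m a else 0)
            + s * (if a = a0 then wMat p u σ m a else 0) := by
        intro a
        by_cases h1 : a = m <;> by_cases h2 : a = a0 <;> simp [h1, h2] <;> split_ifs <;> ring
      rw [Finset.sum_congr rfl fun a _ => this a]
      rw [Finset.sum_add_distrib, ← Finset.mul_sum, ← Finset.mul_sum]
      rw [Finset.sum_ite_eq' Finset.univ m (fun a => wMat p u σ m a),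
        Finset.sum_ite_eq' Finset.univ a0 (fun a => wMat p u σ m a)]
      simp only [Finset.mem_univ, if_pos]
      ring
    · simp only [swapK, if_neg hm, ite_mul, one_mul, zero_mul]
      rw [Finset.sum_ite_eq' Finset.univ m (fun a => wMat p u σ m a)]
      simp [hm]
  rw [Finset.sum_congr rfl fun m _ => hterm m, Finset.sum_add_distrib]
  rw [Finset.sum_ite_eq' Finset.univ m0
    (fun _ => s * (wMat p u σ m0 a0 - wMat p u σ m0 m0))]
  simp

/-- Obedience implies the linearized (first-order) obedience constraints. -/
lemma linearized_of_ambObedient {Ω A Θ : Type*} [Fintype Ω] [Fintype A] [DecidableEq A]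
    [Fintype Θ] {φr : ℝ → ℝ} (hdiff : Differentiable ℝ φr)
    (p : Ω → ℝ) (ur : A → Ω → ℝ) (σ : Θ → Ω → A → ℝ) (μ : Θ → ℝ)
    (hobed : AmbObedient φr p ur σ μ) (m0 a0 : A) :
    ∑ θ, μ θ * (deriv φr (expPayoff p ur (σ θ) tauStar) *
      (wMat p ur (σ θ) m0 a0 - wMat p ur (σ θ) m0 m0)) ≤ 0 := by
  set e : Θ → ℝ := fun θ => expPayoff p ur (σ θ) tauStar with he
  set d : Θ → ℝ := fun θ => wMat p ur (σ θ) m0 a0 - wMat p ur (σ θ) m0 m0 with hd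
  set f : ℝ → ℝ := fun s => ∑ θ, μ θ * φr (e θ + s * d θ) with hf
  have hfle : ∀ s : ℝ, 0 < s → s ≤ 1 → f s ≤ f 0 := by
    intro s hs0 hs1
    have hker := isKernel_swapK (A := A) m0 a0 hs0.le hs1
    have hob := hobed (swapK m0 a0 s) hker
    have hrw : ∀ θ, expPayoff p ur (σ θ) (swapK m0 a0 s) = e θ + s * d θ := by
      intro θ
      rw [expPayoff_swapK, he, hd]
    have h0 : ∀ θ, e θ + 0 * d θ = e θ := fun θ => by ring
    rw [hf]
    simp only [h0]
    calc ∑ θ, μ θ * φr (e θ + s * d θ)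
        = ∑ θ, μ θ * φr (expPayoff p ur (σ θ) (swapK m0 a0 s)) := by
          exact Finset.sum_congr rfl fun θ _ => by rw [hrw θ]
      _ ≤ ∑ θ, μ θ * φr (e θ) := hob
  have hder : HasDerivAt f (∑ θ, μ θ * (deriv φr (e θ) * d θ)) 0 := by
    rw [hf]
    refine HasDerivAt.fun_sum fun θ _ => ?_
    have hlin : HasDerivAt (fun s : ℝ => e θ + s * d θ) (d θ) 0 := by
      simpa using ((hasDerivAt_id (0:ℝ)).mul_const (d θ)).const_add (e θ)
    have hcomp := (hdiff (e θ + 0 * d θ)).hasDerivAt.comp 0 hlin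
    have : e θ + 0 * d θ = e θ := by ring
    rw [this] at hcomp
    exact hcomp.const_mul (μ θ)
  exact hasDerivAt_nonpos_of_le hder hfle


/-- Final arithmetic contradiction for the main theorem. -/
lemma final_arith {α β usb usl Us lam Tb Tl B M L : ℝ}
    (hα : 0 < α) (hus : usl < usb) (hUb : Us ≤ usb) (hlU : usl ≤ Us)
    (hlam0 : 0 < lam) (hlam1 : lam < 1)
    (hB : 0 < B) (hL : 0 < L) (hM : 0 < M) (hBM : B < M) (hML : M < L)
    (hF1 : (α * usb + β) - B * Tb ≤ α * Us + β)
    (hF2 : (α * usl + β) - L * Tl ≤ α * Us + β)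
    (hF3 : (α * Us + β) - (α * (lam * usb + (1 - lam) * usl) + β)
        + M * (lam * Tb + (1 - lam) * Tl) = 0) : False := by
  have hΔb : 0 ≤ α * (usb - Us) := mul_nonneg hα.le (by linarith)
  have hΔl : α * (usl - Us) ≤ 0 := mul_nonpos_of_nonneg_of_nonpos hα.le (by linarith)
  have hexb : α * (usb - Us) = α * usb - α * Us := by ring
  have hexl : α * (usl - Us) = α * usl - α * Us := by ring
  have hb : α * (usb - Us) ≤ B * Tb := by rw [hexb]; linarith
  have hl : α * (usl - Us) ≤ L * Tl := by rw [hexl]; linarith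
  have hTb : α * (usb - Us) / B ≤ Tb := by rw [div_le_iff₀ hB]; linarith
  have hTl : α * (usl - Us) / L ≤ Tl := by rw [div_le_iff₀ hL]; linarith
  have hkey : lam * (α * (usb - Us)) + (1 - lam) * (α * (usl - Us))
      = M * (lam * Tb + (1 - lam) * Tl) := by linear_combination (-1 : ℝ) * hF3
  have h1 : lam * M * (α * (usb - Us) / B) ≤ lam * M * Tb :=
    mul_le_mul_of_nonneg_left hTb (mul_nonneg hlam0.le hM.le)
  have h2 : (1 - lam) * M * (α * (usl - Us) / L) ≤ (1 - lam) * M * Tl :=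
    mul_le_mul_of_nonneg_left hTl (mul_nonneg (by linarith) hM.le)
  have hPQ : lam * M * (α * (usb - Us) / B) + (1 - lam) * M * (α * (usl - Us) / L)
      ≤ lam * (α * (usb - Us)) + (1 - lam) * (α * (usl - Us)) := by
    have e : lam * M * Tb + (1 - lam) * M * Tl = M * (lam * Tb + (1 - lam) * Tl) := by ring
    linarith [h1, h2, hkey, e]
  have idb : lam * M * (α * (usb - Us) / B) - lam * (α * (usb - Us))
      = lam * (α * (usb - Us)) * (M - B) / B := by
    field_simp
  have idl : (1 - lam) * M * (α * (usl - Us) / L) - (1 - lam) * (α * (usl - Us))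
      = (1 - lam) * (α * (usl - Us)) * (M - L) / L := by
    field_simp
  have hP : 0 ≤ lam * (α * (usb - Us)) * (M - B) / B :=
    div_nonneg (mul_nonneg (mul_nonneg hlam0.le hΔb) (by linarith)) hB.le
  have hQ : 0 ≤ (1 - lam) * (α * (usl - Us)) * (M - L) / L :=
    div_nonneg (mul_nonneg_of_nonpos_of_nonpos
      (mul_nonpos_of_nonneg_of_nonpos (by linarith) hΔl) (by linarith)) hL.le
  have hPz : lam * (α * (usb - Us)) * (M - B) / B = 0 := by linarith
  have hQz : (1 - lam) * (α * (usl - Us)) * (M - L) / L = 0 := by linarith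
  have h3 : α * (usb - Us) = 0 := by
    rcases div_eq_zero_iff.mp hPz with h | h
    · rcases mul_eq_zero.mp h with h' | h'
      · rcases mul_eq_zero.mp h' with h'' | h''
        · linarith
        · exact h''
      · linarith
    · linarith
  have h4 : α * (usl - Us) = 0 := by
    rcases div_eq_zero_iff.mp hQz with h | h
    · rcases mul_eq_zero.mp h with h' | h'
      · rcases mul_eq_zero.mp h' with h'' | h''
        · linarith
        · exact h''
      · linarith
    · linarith
  have h5 : α * (usb - usl) = α * (usb - Us) - α * (usl - Us) := by ring
  have h6 : 0 < α * (usb - usl) := mul_pos hα (by linarith)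
  rw [h3, h4] at h5
  linarith

end Obedience
end Aux

/-- Theorem 1 (ii): at a solution `(σ, μ)` of the sender's problem `(P)`,
with `φr` strictly concave and `φs` affine, no experiment in the support of `μ` admits a
Pareto-ranked splitting `(σbar, σlo, lam)` with `u_s(σbar,τ*) ≥ U_s(σ,μ,τ*) ≥ u_s(σlo,τ*)`.
Here `Us` denotes `U_s(σ, μ, τ*)`, i.e. `φs Us = ∑_θ μ_θ φs(u_s(σ_θ, τ*))`. -/
theorem no_pareto_ranked_splitting_at_optimum
    {Ω A Θ : Type*} [Fintype Ω] [Fintype A] [DecidableEq A] [Fintype Θ]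
    (p : Ω → ℝ) (hp : IsProb p) (us ur : A → Ω → ℝ)
    (φs φr : ℝ → ℝ) (hφs : SmoothIndex φs) (hφr : SmoothIndex φr)
    (hφrstrict : StrictConcaveOn ℝ Set.univ φr)
    (hφsaff : ∃ α β : ℝ, ∀ x, φs x = α * x + β)
    (σ : Θ → Ω → A → ℝ) (hσ : ∀ θ, IsKernel (σ θ)) (μ : Θ → ℝ) (hμ : IsProb μ)
    (hobed : AmbObedient φr p ur σ μ)
    (hopt : ∀ (n : ℕ) (σ' : Fin n → Ω → A → ℝ) (μ' : Fin n → ℝ),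
      (∀ j, IsKernel (σ' j)) → IsProb μ' → AmbObedient φr p ur σ' μ' →
      ∑ j, μ' j * φs (expPayoff p us (σ' j) tauStar) ≤
        ∑ θ, μ θ * φs (expPayoff p us (σ θ) tauStar))
    (Us : ℝ) (hUs : φs Us = ∑ θ, μ θ * φs (expPayoff p us (σ θ) tauStar)) :
    ∀ θ, μ θ ≠ 0 →
      ¬ ∃ (σbar σlo : Ω → A → ℝ) (lam : ℝ),
          ParetoRankedSplitting p us ur σbar σlo lam (σ θ) ∧
          Us ≤ expPayoff p us σbar tauStar ∧
          expPayoff p us σlo tauStar ≤ Us := by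
  classical
  obtain ⟨hφs_mono, hφs_conc, hφs_diff⟩ := hφs
  obtain ⟨hφr_mono, hφr_conc, hφr_diff⟩ := hφr
  obtain ⟨α, β, hab⟩ := hφsaff
  have hα : 0 < α := by
    have h01 := hφs_mono (show (0:ℝ) < 1 by norm_num)
    rw [hab 0, hab 1] at h01
    linarith
  rintro θ0 hθ0 ⟨σb, σl, lam, ⟨hKb, hKl, hlam, hmix, hPR⟩, hUb, hlU⟩
  obtain ⟨hlam0, hlam1⟩ := hlam
  -- only the case where σb Pareto-dominates σl is possible
  obtain ⟨husd, hurd⟩ : expPayoff p us σl tauStar < expPayoff p us σb tauStar ∧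
      expPayoff p ur σl tauStar < expPayoff p ur σb tauStar := by
    rcases hPR with h | h
    · exact h
    · exact absurd h.1 (by push_neg; linarith)
  -- the extended family of experiments
  set Exp : Θ ⊕ Bool → Ω → A → ℝ := Sum.elim σ (fun b => cond b σb σl) with hExp
  have hEθ : ∀ θ, Exp (Sum.inl θ) = σ θ := fun θ => by rw [hExp]; rfl
  have hEb : Exp (Sum.inr true) = σb := by rw [hExp]; rfl
  have hEl : Exp (Sum.inr false) = σl := by rw [hExp]; rfl
  have hkerE : ∀ j, IsKernel (Exp j) := by
    rintro (θ | b)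
    · rw [hEθ]; exact hσ θ
    · rcases b with _ | _
      · rw [hEl]; exact hKl
      · rw [hEb]; exact hKb
  -- LP duality
  obtain ⟨y, hy0, hdual⟩ := lp_dual (J := Θ ⊕ Bool) (K := A × A)
    (fun k j => deriv φr (expPayoff p ur (Exp j) tauStar) *
      (wMat p ur (Exp j) k.1 k.2 - wMat p ur (Exp j) k.1 k.1))
    (fun j => φs (expPayoff p us (Exp j) tauStar)) (φs Us)
    (by
      intro x hx0 hx1 hxg
      have hobedx : AmbObedient φr p ur Exp x :=
        ambObedient_of_linearized hφr_conc hφr_diff p ur Exp x hx0 (fun m a => hxg (m, a))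
      set e := Fintype.equivFin (Θ ⊕ Bool) with he
      have hobedx' : AmbObedient φr p ur (fun i => Exp (e.symm i)) (fun i => x (e.symm i)) := by
        intro τ hτ
        have h2 := hobedx τ hτ
        have hl := Equiv.sum_comp e.symm (fun j => x j * φr (expPayoff p ur (Exp j) τ))
        have hr := Equiv.sum_comp e.symm (fun j => x j * φr (expPayoff p ur (Exp j) tauStar))
        calc ∑ i, x (e.symm i) * φr (expPayoff p ur (Exp (e.symm i)) τ)
            = ∑ j, x j * φr (expPayoff p ur (Exp j) τ) := hl
          _ ≤ ∑ j, x j * φr (expPayoff p ur (Exp j) tauStar) := h2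
          _ = ∑ i, x (e.symm i) * φr (expPayoff p ur (Exp (e.symm i)) tauStar) := hr.symm
      have hres := hopt (Fintype.card (Θ ⊕ Bool)) (fun i => Exp (e.symm i))
        (fun i => x (e.symm i)) (fun i => hkerE _)
        ⟨fun i => hx0 _, by rw [Equiv.sum_comp e.symm x]; exact hx1⟩ hobedx'
      have hls := Equiv.sum_comp e.symm (fun j => x j * φs (expPayoff p us (Exp j) tauStar))
      rw [hls] at hres
      rw [hUs]
      exact hres)
  -- the dual functional
  set T : (Θ ⊕ Bool) → ℝ := fun j => ∑ k : A × A, y k *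
    (wMat p ur (Exp j) k.1 k.2 - wMat p ur (Exp j) k.1 k.1) with hT
  have hsum_g : ∀ j, ∑ k : A × A, y k * (deriv φr (expPayoff p ur (Exp j) tauStar) *
      (wMat p ur (Exp j) k.1 k.2 - wMat p ur (Exp j) k.1 k.1))
      = deriv φr (expPayoff p ur (Exp j) tauStar) * T j := by
    intro j
    rw [hT]
    dsimp only
    rw [Finset.mul_sum]
    exact Finset.sum_congr rfl fun k _ => by ring
  have hdual' : ∀ j, φs (expPayoff p us (Exp j) tauStar)
      - deriv φr (expPayoff p ur (Exp j) tauStar) * T j ≤ φs Us := by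
    intro j
    have h := hdual j
    rw [hsum_g j] at h
    exact h
  -- feasibility of the original weights
  set μh : (Θ ⊕ Bool) → ℝ := Sum.elim μ (fun _ => 0) with hμh
  have hμh0 : ∀ j, 0 ≤ μh j := by
    rintro (θ | b)
    · exact hμ.1 θ
    · exact le_refl 0
  have hfeas : ∀ k : A × A, ∑ j, μh j * (deriv φr (expPayoff p ur (Exp j) tauStar) *
      (wMat p ur (Exp j) k.1 k.2 - wMat p ur (Exp j) k.1 k.1)) ≤ 0 := by
    intro k
    rw [Fintype.sum_sum_type]
    have hz : ∑ b : Bool, μh (Sum.inr b) * (deriv φr (expPayoff p ur (Exp (Sum.inr b)) tauStar) *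
        (wMat p ur (Exp (Sum.inr b)) k.1 k.2 - wMat p ur (Exp (Sum.inr b)) k.1 k.1)) = 0 := by
      refine Finset.sum_eq_zero fun b _ => ?_
      have : μh (Sum.inr b) = 0 := rfl
      rw [this, zero_mul]
    rw [hz, add_zero]
    have hre : ∀ θ, μh (Sum.inl θ) * (deriv φr (expPayoff p ur (Exp (Sum.inl θ)) tauStar) *
        (wMat p ur (Exp (Sum.inl θ)) k.1 k.2 - wMat p ur (Exp (Sum.inl θ)) k.1 k.1))
        = μ θ * (deriv φr (expPayoff p ur (σ θ) tauStar) *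
          (wMat p ur (σ θ) k.1 k.2 - wMat p ur (σ θ) k.1 k.1)) := by
      intro θ
      rw [hEθ θ]
      rfl
    rw [Finset.sum_congr rfl fun θ _ => hre θ]
    exact linearized_of_ambObedient hφr_diff p ur σ μ hobed k.1 k.2
  -- the zero-sum/complementary-slackness argument
  have hterm0 : ∀ j ∈ Finset.univ, (0:ℝ) ≤ μh j * (φs Us
      - φs (expPayoff p us (Exp j) tauStar)
      + deriv φr (expPayoff p ur (Exp j) tauStar) * T j) :=
    fun j _ => mul_nonneg (hμh0 j) (by linarith [hdual' j])
  have hμhsum : ∑ j, μh j = 1 := by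
    rw [Fintype.sum_sum_type]
    have h1 : ∑ θ, μh (Sum.inl θ) = ∑ θ, μ θ := rfl
    have h2 : ∑ b : Bool, μh (Sum.inr b) = 0 := by
      refine Finset.sum_eq_zero fun b _ => rfl
    rw [h1, h2, hμ.2, add_zero]
  have hμhf : ∑ j, μh j * φs (expPayoff p us (Exp j) tauStar) = φs Us := by
    rw [Fintype.sum_sum_type]
    have h2 : ∑ b : Bool, μh (Sum.inr b) * φs (expPayoff p us (Exp (Sum.inr b)) tauStar) = 0 := by
      refine Finset.sum_eq_zero fun b _ => ?_
      have : μh (Sum.inr b) = 0 := rfl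
      rw [this, zero_mul]
    have h1 : ∑ θ, μh (Sum.inl θ) * φs (expPayoff p us (Exp (Sum.inl θ)) tauStar)
        = ∑ θ, μ θ * φs (expPayoff p us (σ θ) tauStar) := by
      refine Finset.sum_congr rfl fun θ _ => ?_
      rw [hEθ θ]
      rfl
    rw [h1, h2, add_zero, ← hUs]
  have hthird : ∑ j, μh j * (deriv φr (expPayoff p ur (Exp j) tauStar) * T j) ≤ 0 := by
    have hrw : ∀ j, μh j * (deriv φr (expPayoff p ur (Exp j) tauStar) * T j)
        = ∑ k : A × A, y k * (μh j * (deriv φr (expPayoff p ur (Exp j) tauStar) *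
          (wMat p ur (Exp j) k.1 k.2 - wMat p ur (Exp j) k.1 k.1))) := by
      intro j
      rw [hT]
      dsimp only
      rw [Finset.mul_sum, Finset.mul_sum]
      exact Finset.sum_congr rfl fun k _ => by ring
    rw [Finset.sum_congr rfl fun j _ => hrw j, Finset.sum_comm]
    refine Finset.sum_nonpos fun k _ => ?_
    rw [← Finset.mul_sum]
    refine mul_nonpos_of_nonneg_of_nonpos (hy0 k) ?_
    exact hfeas k
  have hS2 : ∑ j, μh j * (φs Us - φs (expPayoff p us (Exp j) tauStar)
      + deriv φr (expPayoff p ur (Exp j) tauStar) * T j) ≤ 0 := by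
    have hsplit : ∀ j, μh j * (φs Us - φs (expPayoff p us (Exp j) tauStar)
        + deriv φr (expPayoff p ur (Exp j) tauStar) * T j)
        = μh j * φs Us - μh j * φs (expPayoff p us (Exp j) tauStar)
          + μh j * (deriv φr (expPayoff p ur (Exp j) tauStar) * T j) := fun j => by ring
    rw [Finset.sum_congr rfl fun j _ => hsplit j, Finset.sum_add_distrib,
      Finset.sum_sub_distrib, ← Finset.sum_mul, hμhsum, hμhf, one_mul]
    linarith [hthird]
  have hSeq : ∑ j, μh j * (φs Us - φs (expPayoff p us (Exp j) tauStar)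
      + deriv φr (expPayoff p ur (Exp j) tauStar) * T j) = 0 :=
    le_antisymm hS2 (Finset.sum_nonneg hterm0)
  have hall := (Finset.sum_eq_zero_iff_of_nonneg hterm0).mp hSeq
  have hbr := hall (Sum.inl θ0) (Finset.mem_univ _)
  have hμhθ0 : μh (Sum.inl θ0) = μ θ0 := rfl
  have hbr0 : φs Us - φs (expPayoff p us (Exp (Sum.inl θ0)) tauStar)
      + deriv φr (expPayoff p ur (Exp (Sum.inl θ0)) tauStar) * T (Sum.inl θ0) = 0 := by
    rcases mul_eq_zero.mp hbr with h | h
    · rw [hμhθ0] at h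
      exact absurd h hθ0
    · exact h
  -- payoff identities for the mixture
  have hm0r : expPayoff p ur (σ θ0) tauStar
      = lam * expPayoff p ur σb tauStar + (1 - lam) * expPayoff p ur σl tauStar := by
    rw [← hmix, expPayoff_mix]
  have hm0s : expPayoff p us (σ θ0) tauStar
      = lam * expPayoff p us σb tauStar + (1 - lam) * expPayoff p us σl tauStar := by
    rw [← hmix, expPayoff_mix]
  have hTmix : T (Sum.inl θ0) = lam * T (Sum.inr true) + (1 - lam) * T (Sum.inr false) := by
    rw [hT]
    dsimp only
    have hw : ∀ k : A × A, y k * (wMat p ur (Exp (Sum.inl θ0)) k.1 k.2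
          - wMat p ur (Exp (Sum.inl θ0)) k.1 k.1)
        = lam * (y k * (wMat p ur (Exp (Sum.inr true)) k.1 k.2
            - wMat p ur (Exp (Sum.inr true)) k.1 k.1))
          + (1 - lam) * (y k * (wMat p ur (Exp (Sum.inr false)) k.1 k.2
            - wMat p ur (Exp (Sum.inr false)) k.1 k.1)) := by
      intro k
      rw [hEθ θ0, hEb, hEl, ← hmix, wMat_mix, wMat_mix]
      ring
    rw [Finset.sum_congr rfl fun k _ => hw k, Finset.sum_add_distrib,
      ← Finset.mul_sum, ← Finset.mul_sum]
  -- derivative comparisons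
  have hmltb : lam * expPayoff p ur σb tauStar + (1 - lam) * expPayoff p ur σl tauStar
      < expPayoff p ur σb tauStar := by nlinarith
  have hmgtl : expPayoff p ur σl tauStar
      < lam * expPayoff p ur σb tauStar + (1 - lam) * expPayoff p ur σl tauStar := by nlinarith
  have hBM : deriv φr (expPayoff p ur σb tauStar)
      < deriv φr (lam * expPayoff p ur σb tauStar + (1 - lam) * expPayoff p ur σl tauStar) :=
    deriv_strictAnti_of_strictConcave hφrstrict hφr_diff hmltb
  have hML : deriv φr (lam * expPayoff p ur σb tauStar + (1 - lam) * expPayoff p ur σl tauStar)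
      < deriv φr (expPayoff p ur σl tauStar) :=
    deriv_strictAnti_of_strictConcave hφrstrict hφr_diff hmgtl
  have hB : 0 < deriv φr (expPayoff p ur σb tauStar) :=
    deriv_pos_of_strictMono_concave hφr_mono hφr_conc hφr_diff _
  have hL : 0 < deriv φr (expPayoff p ur σl tauStar) :=
    deriv_pos_of_strictMono_concave hφr_mono hφr_conc hφr_diff _
  have hM : 0 < deriv φr (lam * expPayoff p ur σb tauStar
      + (1 - lam) * expPayoff p ur σl tauStar) := lt_trans hB hBM
  -- specialize the dual inequalities
  have hF1 := hdual' (Sum.inr true)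
  rw [hEb] at hF1
  have hF2 := hdual' (Sum.inr false)
  rw [hEl] at hF2
  rw [hEθ θ0, hm0s, hm0r, hTmix] at hbr0
  rw [hab, hab] at hF1
  rw [hab, hab] at hF2
  rw [hab, hab] at hbr0
  exact final_arith hα husd hUb hlU hlam0 hlam1 hB hL hM hBM hML hF1 hF2 hbr0
end

section
/- Necessary condition on a beneficial ambiguous experiment: If an obedient ambiguous experiment (σ, μ) benefits the sender, i.e., U_s(σ, μ, τ*) > u_s^BP, then there exist θ, θ' in the support of μ such that σ_θ and σ_{θ'} are Pareto-ranked with u_s(σ_θ, τ*) > u_s^BP ≥ u_s(σ_{θ'}, τ*). -/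
open Finset

section AuxLemmas

variable {Ω M A : Type*} [Fintype Ω] [Fintype M] [Fintype A]

lemma expPayoff_tau_combo (p : Ω → ℝ) (u : A → Ω → ℝ) (σ : Ω → M → ℝ) (τ1 τ2 : M → A → ℝ)
    (b c : ℝ) :
    expPayoff p u σ (fun m a => b * τ1 m a + c * τ2 m a)
      = b * expPayoff p u σ τ1 + c * expPayoff p u σ τ2 := by
  simp only [expPayoff, Finset.mul_sum, ← Finset.sum_add_distrib]
  exact Finset.sum_congr rfl fun ω _ => Finset.sum_congr rfl fun m _ =>
    Finset.sum_congr rfl fun a _ => by ring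

lemma expPayoff_sigma_sum {Θ : Type*} [Fintype Θ] (p : Ω → ℝ) (u : A → Ω → ℝ)
    (c : Θ → ℝ) (σ : Θ → Ω → M → ℝ) (τ : M → A → ℝ) :
    expPayoff p u (fun ω m => ∑ θ, c θ * σ θ ω m) τ
      = ∑ θ, c θ * expPayoff p u (σ θ) τ := by
  simp only [expPayoff]
  have h : ∀ ω m a, p ω * (∑ θ, c θ * σ θ ω m) * τ m a * u a ω
      = ∑ θ, c θ * (p ω * σ θ ω m * τ m a * u a ω) := by
    intro ω m a
    rw [Finset.mul_sum, Finset.sum_mul, Finset.sum_mul]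
    exact Finset.sum_congr rfl fun θ _ => by ring
  simp only [h]
  calc ∑ ω, ∑ m, ∑ a, ∑ θ, c θ * (p ω * σ θ ω m * τ m a * u a ω)
      = ∑ ω, ∑ m, ∑ θ, ∑ a, c θ * (p ω * σ θ ω m * τ m a * u a ω) :=
        Finset.sum_congr rfl fun ω _ => Finset.sum_congr rfl fun m _ => Finset.sum_comm
    _ = ∑ ω, ∑ θ, ∑ m, ∑ a, c θ * (p ω * σ θ ω m * τ m a * u a ω) :=
        Finset.sum_congr rfl fun ω _ => Finset.sum_comm
    _ = ∑ θ, ∑ ω, ∑ m, ∑ a, c θ * (p ω * σ θ ω m * τ m a * u a ω) := Finset.sum_comm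
    _ = ∑ θ, c θ * ∑ ω, ∑ m, ∑ a, p ω * σ θ ω m * τ m a * u a ω :=
        Finset.sum_congr rfl fun θ _ => by simp only [← Finset.mul_sum]

lemma deriv_pos_of_smoothIndex {φ : ℝ → ℝ} (hφ : SmoothIndex φ) (x : ℝ) : 0 < deriv φ x := by
  obtain ⟨hm, hc, hd⟩ := hφ
  have hs : slope φ x (x + 1) ≤ deriv φ x :=
    hc.slope_le_deriv (Set.mem_univ x) (Set.mem_univ (x + 1)) (by linarith) (hd x)
  have : 0 < slope φ x (x + 1) := by
    rw [slope_def_field]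
    have := hm (show x < x + 1 by linarith)
    have h1 : (x + 1 - x) = 1 := by ring
    rw [h1]
    simpa using sub_pos.mpr this
  linarith

lemma deriv_antitone_of_smoothIndex {φ : ℝ → ℝ} (hφ : SmoothIndex φ) : Antitone (deriv φ) := by
  obtain ⟨hm, hc, hd⟩ := hφ
  intro a b hab
  exact hc.antitoneOn_deriv (fun x _ => hd x) (Set.mem_univ a) (Set.mem_univ b) hab

/-- First-order condition: if the ambiguous experiment `(σ, μ)` is obedient, then the
`φr'`-weighted average of the receiver's gains from deviating to any strategy `τ` is
nonpositive. -/
lemma foc_of_ambObedient {Ω A Θ : Type*} [Fintype Ω] [Fintype A] [DecidableEq A] [Fintype Θ]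
    {φr : ℝ → ℝ} (hφr : SmoothIndex φr) (p : Ω → ℝ) (ur : A → Ω → ℝ)
    {σ : Θ → Ω → A → ℝ} {μ : Θ → ℝ} (hμ : IsProb μ)
    (hobed : AmbObedient φr p ur σ μ) (τ : A → A → ℝ) (hτ : IsKernel τ) :
    ∑ θ, μ θ * (deriv φr (expPayoff p ur (σ θ) tauStar) *
      (expPayoff p ur (σ θ) τ - expPayoff p ur (σ θ) tauStar)) ≤ 0 := by
  set xr : Θ → ℝ := fun θ => expPayoff p ur (σ θ) tauStar with hxr
  set y : Θ → ℝ := fun θ => expPayoff p ur (σ θ) τ with hy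
  set g : ℝ → ℝ := fun lam => ∑ θ, μ θ * φr (xr θ + lam * (y θ - xr θ)) with hg
  have hg_deriv : HasDerivAt g (∑ θ, μ θ * (deriv φr (xr θ) * (y θ - xr θ))) 0 := by
    apply HasDerivAt.fun_sum
    intro θ _
    have h1 : HasDerivAt (fun lam : ℝ => xr θ + lam * (y θ - xr θ)) (y θ - xr θ) 0 := by
      simpa using ((hasDerivAt_id (0 : ℝ)).mul_const (y θ - xr θ)).const_add (xr θ)
    have h2 : HasDerivAt φr (deriv φr (xr θ)) (xr θ + 0 * (y θ - xr θ)) := by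
      simpa using (hφr.2.2 (xr θ)).hasDerivAt
    simpa using (h2.comp 0 h1).const_mul (μ θ)
  have hmax : IsMaxOn g (Set.Icc (0 : ℝ) 1) 0 := by
    intro lam hlam
    simp only [Set.mem_Icc] at hlam
    have hk : IsKernel (fun m a => (1 - lam) * tauStar m a + lam * τ m a) := by
      constructor
      · intro m a
        show 0 ≤ (1 - lam) * tauStar m a + lam * τ m a
        have h1 : (0 : ℝ) ≤ tauStar m a := by unfold tauStar; split <;> norm_num
        have := hτ.1 m a
        nlinarith [hlam.1, hlam.2]
      · intro m
        have h1 : ∑ a, tauStar m a = 1 := by simp [tauStar]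
        rw [Finset.sum_add_distrib, ← Finset.mul_sum, ← Finset.mul_sum, h1, hτ.2 m]
        ring
    have hob := hobed _ hk
    have he : ∀ θ, expPayoff p ur (σ θ) (fun m a => (1 - lam) * tauStar m a + lam * τ m a)
        = xr θ + lam * (y θ - xr θ) := by
      intro θ
      rw [expPayoff_tau_combo]
      simp only [hxr, hy]
      ring
    simp only [he] at hob
    simpa [g, Set.mem_setOf_eq] using hob
  have hmem : (1 : ℝ) ∈ posTangentConeAt (Set.Icc (0 : ℝ) 1) 0 := by
    have hsub : segment ℝ (0 : ℝ) 1 ⊆ Set.Icc (0 : ℝ) 1 := by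
      rw [segment_eq_Icc (by norm_num : (0:ℝ) ≤ 1)]
    simpa using sub_mem_posTangentConeAt_of_segment_subset hsub
  have hfd := hg_deriv.hasFDerivAt.hasFDerivWithinAt (s := Set.Icc (0 : ℝ) 1)
  have hnp := hmax.localize.hasFDerivWithinAt_nonpos hfd hmem
  simpa using hnp

end AuxLemmas

/-- Theorem 2: if the obedient ambiguous experiment `(σ, μ)` benefits the
sender (`U_s(σ, μ, τ*) > u_s^BP`, stated via the strictly increasing `φs`), then there are
`θ, θ'` in the support of `μ` with `σ_θ, σ_{θ'}` Pareto-ranked and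
`u_s(σ_θ, τ*) > u_s^BP ≥ u_s(σ_{θ'}, τ*)`. -/
theorem necessary_pareto_ranked_pair
    {Ω A Θ : Type*} [Fintype Ω] [Fintype A] [DecidableEq A] [Fintype Θ]
    (p : Ω → ℝ) (hp : IsProb p) (us ur : A → Ω → ℝ)
    (φs φr : ℝ → ℝ) (hφs : SmoothIndex φs) (hφr : SmoothIndex φr)
    (usBP : ℝ)
    (husBP : IsGreatest {x : ℝ | ∃ σ0 : Ω → A → ℝ,
      IsKernel σ0 ∧ Obedient p ur σ0 ∧ x = expPayoff p us σ0 tauStar} usBP)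
    (σ : Θ → Ω → A → ℝ) (hσ : ∀ θ, IsKernel (σ θ)) (μ : Θ → ℝ) (hμ : IsProb μ)
    (hobed : AmbObedient φr p ur σ μ)
    (hben : φs usBP < ∑ θ, μ θ * φs (expPayoff p us (σ θ) tauStar)) :
    ∃ θ θ', μ θ ≠ 0 ∧ μ θ' ≠ 0 ∧ ParetoRanked p us ur (σ θ) (σ θ') ∧
      usBP < expPayoff p us (σ θ) tauStar ∧
      expPayoff p us (σ θ') tauStar ≤ usBP := by
  classical
  set uS : Θ → ℝ := fun θ => expPayoff p us (σ θ) tauStar with huS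
  set xr : Θ → ℝ := fun θ => expPayoff p ur (σ θ) tauStar with hxr
  have hder_pos : ∀ t : ℝ, 0 < deriv φr t := deriv_pos_of_smoothIndex hφr
  have hder_anti : Antitone (deriv φr) := deriv_antitone_of_smoothIndex hφr
  set w : Θ → ℝ := fun θ => μ θ * deriv φr (xr θ) with hw
  have hw_nonneg : ∀ θ, 0 ≤ w θ := fun θ => mul_nonneg (hμ.1 θ) (hder_pos _).le
  -- some state has positive weight
  obtain ⟨θ0, hθ0⟩ : ∃ θ0, 0 < μ θ0 := by
    by_contra h
    push_neg at h
    have : ∑ θ, μ θ = 0 := Finset.sum_eq_zero fun θ _ => le_antisymm (h θ) (hμ.1 θ)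
    rw [hμ.2] at this; norm_num at this
  have hW : 0 < ∑ θ, w θ := by
    have h1 : w θ0 ≤ ∑ θ, w θ :=
      Finset.single_le_sum (fun θ _ => hw_nonneg θ) (Finset.mem_univ θ0)
    have h2 : 0 < w θ0 := mul_pos hθ0 (hder_pos _)
    linarith
  set W : ℝ := ∑ θ, w θ with hWdef
  -- the φr'-weighted mixture experiment is an obedient kernel
  set σbar : Ω → A → ℝ := fun ω a => ∑ θ, (w θ / W) * σ θ ω a with hσbar
  have hker : IsKernel σbar := by
    constructor
    · intro ω a
      exact Finset.sum_nonneg fun θ _ =>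
        mul_nonneg (div_nonneg (hw_nonneg θ) hW.le) ((hσ θ).1 ω a)
    · intro ω
      rw [Finset.sum_comm]
      have : ∀ θ, ∑ a, w θ / W * σ θ ω a = w θ / W := by
        intro θ; rw [← Finset.mul_sum, (hσ θ).2 ω, mul_one]
      simp only [this]
      rw [← Finset.sum_div, ← hWdef, div_self hW.ne']
  have hob : Obedient p ur σbar := by
    intro τ hτ
    rw [hσbar, expPayoff_sigma_sum, expPayoff_sigma_sum]
    have hfoc := foc_of_ambObedient hφr p ur hμ hobed τ hτ
    rw [← sub_nonpos, ← Finset.sum_sub_distrib]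
    have he : ∀ θ ∈ Finset.univ (α := Θ),
        w θ / W * expPayoff p ur (σ θ) τ - w θ / W * expPayoff p ur (σ θ) tauStar
        = (μ θ * (deriv φr (expPayoff p ur (σ θ) tauStar) *
            (expPayoff p ur (σ θ) τ - expPayoff p ur (σ θ) tauStar))) / W := by
      intro θ _
      rw [hw]
      field_simp
      ring
    rw [Finset.sum_congr rfl he, ← Finset.sum_div]
    exact div_nonpos_of_nonpos_of_nonneg hfoc hW.le
  -- hence its sender value is at most usBP
  have hmemBP : expPayoff p us σbar tauStar ≤ usBP :=
    husBP.2 ⟨σbar, hker, hob, rfl⟩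
  have hstar : ∑ θ, w θ * (uS θ - usBP) ≤ 0 := by
    rw [hσbar, expPayoff_sigma_sum] at hmemBP
    have h1 : ∑ θ, w θ / W * uS θ ≤ usBP := hmemBP
    have e1 : ∑ θ, w θ * (uS θ - usBP) = (∑ θ, w θ * uS θ) - W * usBP := by
      simp only [mul_sub]
      rw [Finset.sum_sub_distrib, ← Finset.sum_mul, ← hWdef]
    have e2 : ∑ θ, w θ * uS θ = W * ∑ θ, w θ / W * uS θ := by
      rw [Finset.mul_sum]
      exact Finset.sum_congr rfl fun θ _ => by field_simp [hW.ne']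
    have e3 : W * ∑ θ, w θ / W * uS θ ≤ W * usBP := mul_le_mul_of_nonneg_left h1 hW.le
    rw [e1, e2]
    linarith
  -- Jensen: the average sender payoff strictly exceeds usBP
  set ubar : ℝ := ∑ θ, μ θ * uS θ with hubar
  have hjensen : ∑ θ, μ θ * φs (uS θ) ≤ φs ubar := by
    have := hφs.2.1.le_map_sum (t := Finset.univ) (w := μ) (p := uS)
      (fun θ _ => hμ.1 θ) hμ.2 (fun θ _ => Set.mem_univ _)
    simpa [smul_eq_mul, hubar] using this
  have hubar_gt : usBP < ubar := by
    have : φs usBP < φs ubar := lt_of_lt_of_le hben hjensen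
    exact hφs.1.lt_iff_lt.mp this
  -- there is a supported θ with uS θ > usBP
  obtain ⟨θ1, hθ1μ, hθ1u⟩ : ∃ θ1, μ θ1 ≠ 0 ∧ usBP < uS θ1 := by
    by_contra h
    push_neg at h
    have : ubar ≤ usBP := by
      rw [hubar]
      calc ∑ θ, μ θ * uS θ ≤ ∑ θ, μ θ * usBP := by
            refine Finset.sum_le_sum fun θ _ => ?_
            by_cases hz : μ θ = 0
            · simp [hz]
            · exact mul_le_mul_of_nonneg_left (h θ hz) (hμ.1 θ)
        _ = usBP := by rw [← Finset.sum_mul, hμ.2, one_mul]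
    linarith
  -- suppose no Pareto-ranked pair straddling usBP exists
  by_contra hcon
  push_neg at hcon
  have hkey : ∀ θ θ', μ θ ≠ 0 → μ θ' ≠ 0 → usBP < uS θ → uS θ' ≤ usBP → xr θ ≤ xr θ' := by
    intro θ θ' h1 h2 h3 h4
    by_contra h5
    push_neg at h5
    have hP : ParetoRanked p us ur (σ θ) (σ θ') := Or.inl ⟨h4.trans_lt h3, h5⟩
    exact absurd h4 (not_le.mpr (hcon θ θ' h1 h2 hP h3))
  -- pick the supported high-sender state with maximal receiver payoff
  set H : Finset Θ := Finset.univ.filter (fun θ => μ θ ≠ 0 ∧ usBP < uS θ) with hH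
  have hθ1H : θ1 ∈ H := by simp [hH, hθ1μ, hθ1u]
  obtain ⟨θh, hθhH, hθh_max⟩ := H.exists_max_image xr ⟨θ1, hθ1H⟩
  have hθhμ : μ θh ≠ 0 := (Finset.mem_filter.mp hθhH).2.1
  have hθhu : usBP < uS θh := (Finset.mem_filter.mp hθhH).2.2
  set cc : ℝ := deriv φr (xr θh) with hcc
  have hcc_pos : 0 < cc := hder_pos _
  -- termwise comparison
  have hterm : ∀ θ ∈ Finset.univ (α := Θ), μ θ * (cc * (uS θ - usBP)) ≤ w θ * (uS θ - usBP) := by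
    intro θ _
    by_cases hz : μ θ = 0
    · simp [hz, hw]
    have hrw : w θ * (uS θ - usBP) = μ θ * (deriv φr (xr θ) * (uS θ - usBP)) := by
      rw [hw]; ring
    rw [hrw]
    refine mul_le_mul_of_nonneg_left ?_ (hμ.1 θ)
    by_cases hcase : usBP < uS θ
    · -- θ ∈ H: xr θ ≤ xr θh, so cc ≤ deriv φr (xr θ)
      have hθH : θ ∈ H := by simp [hH, hz, hcase]
      have hle : xr θ ≤ xr θh := hθh_max θ hθH
      have : cc ≤ deriv φr (xr θ) := hder_anti hle
      exact mul_le_mul_of_nonneg_right this (by linarith)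
    · push_neg at hcase
      have hle : xr θh ≤ xr θ := hkey θh θ hθhμ hz hθhu hcase
      have : deriv φr (xr θ) ≤ cc := hder_anti hle
      exact mul_le_mul_of_nonpos_right this (by linarith)
  have hsum : ∑ θ, μ θ * (cc * (uS θ - usBP)) ≤ ∑ θ, w θ * (uS θ - usBP) :=
    Finset.sum_le_sum hterm
  have hlhs : ∑ θ, μ θ * (cc * (uS θ - usBP)) = cc * (ubar - usBP) := by
    have e : ∀ θ, μ θ * (cc * (uS θ - usBP)) = cc * (μ θ * uS θ) - cc * usBP * μ θ :=
      fun θ => by ring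
    simp only [e]
    rw [Finset.sum_sub_distrib, ← Finset.mul_sum, ← Finset.mul_sum, ← hubar, hμ.2]
    ring
  have hfinal : 0 < cc * (ubar - usBP) := mul_pos hcc_pos (by linarith)
  rw [hlhs] at hsum
  linarith
end
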